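/- arXiv:math/0511454 — 5 statements merged into one kernel-verified Lean document; each statement's English description precedes it below -/
import Mathlib

section
/- With the notation of the context, 𝒜_ℚ ∩ M(A,B) = 𝒜 and ℬ_ℚ ∩ M(A,B) = ℬ. Equivalently: if α : A → ℚ[G] is such that α(a)(e − μ(b)) ∈ ℤ[G] for all a ∈ A and b ∈ B, then there exists α′ : A → ℤ[G] with α′(a)(e − μ(b)) = α(a)(e − μ(b)) for all a ∈ A, b ∈ B; and if β : B → ℚ[G] is such that β(b)(e − μ(a)) ∈ ℤ[G] for all a ∈ A and b ∈ B, then there exists β′ : B → ℤ[G] with β′(b)(e − μ(a)) = β(b)(e − μ(a)) for all a ∈ A, b ∈ B. -/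
open MonoidAlgebra

/-- The integral group ring ℤ[G]. -/
noncomputable abbrev ZG (G : Type) [CommGroup G] := MonoidAlgebra ℤ G

/-- The rational group ring ℚ[G]. -/
noncomputable abbrev QG (G : Type) [CommGroup G] := MonoidAlgebra ℚ G

/-- The canonical embedding ℤ[G] → ℚ[G]. -/
noncomputable def toQ (G : Type) [CommGroup G] : ZG G →ₐ[ℤ] QG G :=
  MonoidAlgebra.lift ℤ (QG G) G (MonoidAlgebra.of ℚ G)

variable {G : Type} [CommGroup G]

lemma toQ_single (g : G) (n : ℤ) :
    toQ G (MonoidAlgebra.single g n) = MonoidAlgebra.single g (n : ℚ) := by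
  rw [toQ, MonoidAlgebra.lift_single]
  simp [MonoidAlgebra.of_apply, MonoidAlgebra.intCast_def, MonoidAlgebra.single_mul_single]

lemma toQ_apply (z : ZG G) (t : G) : (toQ G z).coeff t = ((z.coeff t : ℤ) : ℚ) := by
  induction z using MonoidAlgebra.induction_linear with
  | zero => simp
  | add f g hf hg =>
      rw [map_add]
      rw [MonoidAlgebra.coeff_add, MonoidAlgebra.coeff_add, Finsupp.add_apply, Finsupp.add_apply, hf, hg, Int.cast_add]
  | single g n =>
      rw [toQ_single]
      by_cases h : g = t <;> simp [MonoidAlgebra.coeff_single, Finsupp.single_apply, h]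

lemma coeff_mul_og (x : QG G) (g t : G) :
    (x * (1 - MonoidAlgebra.of ℚ G g)).coeff t = x.coeff t - x.coeff (t * g⁻¹) := by
  rw [mul_sub, mul_one, MonoidAlgebra.coeff_sub, Finsupp.sub_apply, MonoidAlgebra.of_apply,
    MonoidAlgebra.coeff_mul_single_apply, mul_one]

lemma extend (x : QG G) (S0 : Set G) (hgen : Subgroup.closure S0 = ⊤)
    (h : ∀ g ∈ S0, ∃ z : ZG G, toQ G z = x * (1 - MonoidAlgebra.of ℚ G g)) :
    ∀ g : G, ∃ z : ZG G, toQ G z = x * (1 - MonoidAlgebra.of ℚ G g) := by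
  let S : Subgroup G :=
  { carrier := {g | ∃ z : ZG G, toQ G z = x * (1 - MonoidAlgebra.of ℚ G g)}
    one_mem' := ⟨0, by simp [MonoidAlgebra.one_def]⟩
    mul_mem' := by
      rintro a b ⟨z₁, h₁⟩ ⟨z₂, h₂⟩
      refine ⟨z₁ + z₂ * MonoidAlgebra.single a 1, ?_⟩
      have hs : toQ G (MonoidAlgebra.single a (1:ℤ)) = MonoidAlgebra.of ℚ G a := by
        rw [toQ_single]; rfl
      rw [map_add, map_mul, h₁, h₂, hs]
      rw [map_mul]
      ring
    inv_mem' := by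
      rintro a ⟨z₁, h₁⟩
      refine ⟨-(z₁ * MonoidAlgebra.single a⁻¹ 1), ?_⟩
      have hs : toQ G (MonoidAlgebra.single a⁻¹ (1:ℤ)) = MonoidAlgebra.of ℚ G a⁻¹ := by
        rw [toQ_single]; rfl
      have hinv : MonoidAlgebra.of ℚ G a * MonoidAlgebra.of ℚ G a⁻¹ = 1 := by
        rw [← map_mul]; simp [MonoidAlgebra.one_def]
      rw [map_neg, map_mul, h₁, hs]
      linear_combination x * hinv }
  intro g
  have : g ∈ S := by
    have := (Subgroup.closure_le S).2 (fun y hy => h y hy)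
    rw [hgen] at this
    exact this (Subgroup.mem_top g)
  exact this

lemma main [Fintype G] (x : QG G)
    (h : ∀ g : G, ∃ z : ZG G, toQ G z = x * (1 - MonoidAlgebra.of ℚ G g)) :
    ∃ x' : ZG G, ∀ g : G,
      toQ G x' * (1 - MonoidAlgebra.of ℚ G g) = x * (1 - MonoidAlgebra.of ℚ G g) := by
  have hco : ∀ t s : G, ∃ n : ℤ, x.coeff t - x.coeff s = (n : ℚ) := by
    intro t s
    obtain ⟨z, hz⟩ := h (s⁻¹ * t)
    refine ⟨z.coeff t, ?_⟩
    have := congrArg (fun f => f.coeff t) hz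
    simp only [toQ_apply, coeff_mul_og] at this
    have hts : t * (s⁻¹ * t)⁻¹ = s := by group
    rw [hts] at this
    exact this.symm
  classical
  refine ⟨MonoidAlgebra.ofCoeff (Finsupp.equivFunOnFinite.symm fun g => ⌊x.coeff g⌋), ?_⟩
  intro g
  ext t
  rw [coeff_mul_og, coeff_mul_og]
  have h1 : (toQ G (MonoidAlgebra.ofCoeff (Finsupp.equivFunOnFinite.symm fun g => ⌊x.coeff g⌋))).coeff t = ((⌊x.coeff t⌋ : ℤ) : ℚ) := by
    rw [toQ_apply]; rfl
  have h2 : (toQ G (MonoidAlgebra.ofCoeff (Finsupp.equivFunOnFinite.symm fun g => ⌊x.coeff g⌋))).coeff (t * g⁻¹)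
      = ((⌊x.coeff (t * g⁻¹)⌋ : ℤ) : ℚ) := by
    rw [toQ_apply]; rfl
  rw [h1, h2]
  obtain ⟨n, hn⟩ := hco t (t * g⁻¹)
  have hx : x.coeff t = x.coeff (t * g⁻¹) + (n : ℚ) := by linarith
  rw [hx, ← Rat.cast_intCast]  -- maybe unnecessary
  rw [Int.floor_add_intCast]
  push_cast
  ring

/-- Lemma 2.1 (ABpure): 𝒜_ℚ ∩ M(A,B) = 𝒜 and ℬ_ℚ ∩ M(A,B) = ℬ.  If
`α : A → ℚ[G]` is such that all the products `α(a)(e − μ(b))` are integral, then they can be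
realized by some `α′ : A → ℤ[G]`; and symmetrically for `β : B → ℚ[G]`. -/
theorem statement0
    (G : Type) [CommGroup G] [Fintype G]
    (A B : Type) [Fintype A] [Fintype B]
    (μ : A ⊕ B → G)
    (hA : Subgroup.closure (Set.range fun a : A => μ (Sum.inl a)) = ⊤)
    (hB : Subgroup.closure (Set.range fun b : B => μ (Sum.inr b)) = ⊤) :
    (∀ α : A → QG G,
      (∀ a b, ∃ z : ZG G, toQ G z = α a * (1 - MonoidAlgebra.of ℚ G (μ (Sum.inr b)))) →
      ∃ α' : A → ZG G, ∀ a b,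
        toQ G (α' a) * (1 - MonoidAlgebra.of ℚ G (μ (Sum.inr b)))
          = α a * (1 - MonoidAlgebra.of ℚ G (μ (Sum.inr b))))
    ∧
    (∀ β : B → QG G,
      (∀ a b, ∃ z : ZG G, toQ G z = β b * (1 - MonoidAlgebra.of ℚ G (μ (Sum.inl a)))) →
      ∃ β' : B → ZG G, ∀ a b,
        toQ G (β' b) * (1 - MonoidAlgebra.of ℚ G (μ (Sum.inl a)))
          = β b * (1 - MonoidAlgebra.of ℚ G (μ (Sum.inl a)))) := by
  constructor
  · intro α h
    have key : ∀ a : A, ∃ x' : ZG G, ∀ g : G,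
        toQ G x' * (1 - MonoidAlgebra.of ℚ G g) = α a * (1 - MonoidAlgebra.of ℚ G g) := by
      intro a
      apply main
      apply extend _ _ hB
      rintro g ⟨b, rfl⟩
      exact h a b
    choose α' hα' using key
    exact ⟨α', fun a b => hα' a _⟩
  · intro β h
    have key : ∀ b : B, ∃ x' : ZG G, ∀ g : G,
        toQ G x' * (1 - MonoidAlgebra.of ℚ G g) = β b * (1 - MonoidAlgebra.of ℚ G g) := by
      intro b
      apply main
      apply extend _ _ hA
      rintro g ⟨a, rfl⟩
      exact h a b
    choose β' hβ' using key
    exact ⟨β', fun a b => hβ' b _⟩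
end

section
/- Let C and D be further finite sets and ν : C ∪ D → G a map such that both ν(C) and ν(D) generate G, with M(C,D), 𝒞, 𝒟, N(C,D), ρ_{C,D} defined analogously. Choose elements s(a,c) ∈ ℤ[G] (a ∈ A, c ∈ C) with Σ_{a∈A} (e − μ(a)) s(a,c) = e − ν(c) for all c ∈ C, and t(b,d) ∈ ℤ[G] (b ∈ B, d ∈ D) with Σ_{b∈B} (e − μ(b)) t(b,d) = e − ν(d) for all d ∈ D. Define the homomorphism π : M_ℚ(A,B) → M_ℚ(C,D) by π(r ⊗ a ⊗ b) = Σ_{c∈C} Σ_{d∈D} r·s(a,c)·t(b,d) ⊗ c ⊗ d for r ∈ ℚ[G]. Then π maps M(A,B) into M(C,D) and 𝒜 + ℬ into 𝒞 + 𝒟, so it induces a homomorphism π̃ : N(A,B) → N(C,D) with π̃∘ρ_{A,B} = ρ_{C,D}∘π on M(A,B); and π̃ restricts to an isomorphism from the torsion subgroup T(N(A,B)) onto the torsion subgroup T(N(C,D)). -/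
open MonoidAlgebra

variable (G : Type) [CommGroup G] (A B : Type)

/-- The subgroup 𝒜 of M(A,B) = ℤ[G] ⊗ ℤ^A ⊗ ℤ^B (identified with A → B → ℤ[G]),
consisting of the elements Σ α(a)(e − μ(b)) ⊗ a ⊗ b with α : A → ℤ[G]. -/
noncomputable def calA (μ : A ⊕ B → G) : AddSubgroup (A → B → ZG G) where
  carrier := {r | ∃ α : A → ZG G, ∀ a b, r a b = α a * (1 - MonoidAlgebra.of ℤ G (μ (Sum.inr b)))}
  add_mem' := by
    rintro r r' ⟨α, hα⟩ ⟨α', hα'⟩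
    exact ⟨α + α', fun a b => by simp [hα, hα', add_mul]⟩
  zero_mem' := ⟨0, fun a b => by simp⟩
  neg_mem' := by
    rintro r ⟨α, hα⟩
    exact ⟨-α, fun a b => by simp [hα, neg_mul]⟩

/-- The subgroup ℬ of M(A,B), consisting of the elements Σ β(b)(e − μ(a)) ⊗ a ⊗ b
with β : B → ℤ[G]. -/
noncomputable def calB (μ : A ⊕ B → G) : AddSubgroup (A → B → ZG G) where
  carrier := {r | ∃ β : B → ZG G, ∀ a b, r a b = β b * (1 - MonoidAlgebra.of ℤ G (μ (Sum.inl a)))}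
  add_mem' := by
    rintro r r' ⟨β, hβ⟩ ⟨β', hβ'⟩
    exact ⟨β + β', fun a b => by simp [hβ, hβ', add_mul]⟩
  zero_mem' := ⟨0, fun a b => by simp⟩
  neg_mem' := by
    rintro r ⟨β, hβ⟩
    exact ⟨-β, fun a b => by simp [hβ, neg_mul]⟩

section Helpers

variable {Γ : Type} [CommGroup Γ]

private lemma sum_single_apply [Fintype Γ] (c : Γ → ℤ) (y : Γ) :
    (∑ x : Γ, MonoidAlgebra.single x (c x)).coeff y = c y := by
  classical
  rw [MonoidAlgebra.coeff_sum, Finsupp.finset_sum_apply]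
  rw [Finset.sum_eq_single y (fun b _ hb => by simp [MonoidAlgebra.coeff_single, Finsupp.single_apply, hb]) (by simp)]
  simp

private noncomputable def sigG (Γ : Type) [CommGroup Γ] [Fintype Γ] : ZG Γ :=
  ∑ g : Γ, MonoidAlgebra.single g (1 : ℤ)

private lemma sigG_apply [Fintype Γ] (x : Γ) : (sigG Γ).coeff x = 1 :=
  sum_single_apply (fun _ => (1:ℤ)) x

private lemma sigG_mul_sub [Fintype Γ] (g : Γ) :
    sigG Γ * (1 - MonoidAlgebra.of ℤ Γ g) = 0 := by
  have h : sigG Γ * MonoidAlgebra.of ℤ Γ g = sigG Γ := by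
    rw [sigG, Finset.sum_mul]
    simp only [MonoidAlgebra.of_apply, MonoidAlgebra.single_mul_single, one_mul]
    exact Fintype.sum_bijective (· * g) (Group.mulRight_bijective g) _ _ (fun h => rfl)
  rw [mul_sub, mul_one, h, sub_self]

end Helpers

section Helpers2
set_option linter.unusedSectionVars false

variable {Γ : Type} [CommGroup Γ]

private lemma key_purify {ι κ : Type} [Fintype Γ] (h : κ → Γ)
    (hgen : Subgroup.closure (Set.range h) = ⊤)
    (q : ι → κ → ZG Γ) (X : ι → ZG Γ) (n : ℕ) (hn : 0 < n)
    (hq : ∀ i k, n • q i k = X i * (1 - MonoidAlgebra.of ℤ Γ (h k))) :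
    ∃ Y : ι → ZG Γ, ∀ i k, q i k = Y i * (1 - MonoidAlgebra.of ℤ Γ (h k)) := by
  classical
  have Hdvd : ∀ (i : ι) (g : Γ), ∀ x : Γ, (n:ℤ) ∣ (X i).coeff x - (X i).coeff (x * g⁻¹) := by
    intro i g
    have hgmem : g ∈ Subgroup.closure (Set.range h) := by rw [hgen]; trivial
    induction hgmem using Subgroup.closure_induction with
    | mem y hy =>
        obtain ⟨k, rfl⟩ := hy
        intro x
        have h0 := congrArg (fun f : ZG Γ => f.coeff x) (hq i k)
        simp only [mul_sub, mul_one] at h0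
        rw [MonoidAlgebra.coeff_smul_apply, MonoidAlgebra.coeff_sub, Finsupp.sub_apply] at h0
        rw [MonoidAlgebra.of_apply, MonoidAlgebra.coeff_mul_single_apply, mul_one] at h0
        exact ⟨(q i k).coeff x, by rw [← h0]; simp [mul_comm]⟩
    | one => intro x; simp
    | mul y z hy hz ihy ihz =>
        intro x
        have h2 := dvd_add (ihz x) (ihy (x * z⁻¹))
        rw [sub_add_sub_cancel] at h2
        rw [mul_inv_rev, ← mul_assoc]
        exact h2
    | inv y hy ihy =>
        intro x
        have h2 := (dvd_neg).mpr (ihy (x * y))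
        rw [neg_sub, mul_inv_cancel_right] at h2
        rw [inv_inv]
        exact h2
  refine ⟨fun i => ∑ x : Γ, MonoidAlgebra.single x (((X i).coeff x - (X i).coeff 1)/(n:ℤ)), fun i k => ?_⟩
  set Y : ZG Γ := ∑ x : Γ, MonoidAlgebra.single x (((X i).coeff x - (X i).coeff 1)/(n:ℤ)) with hY
  have hnY : n • Y = X i - ((X i).coeff 1) • sigG Γ := by
    apply MonoidAlgebra.coeff_injective; apply Finsupp.ext
    intro x
    have hdvd1 : (n:ℤ) ∣ (X i).coeff x - (X i).coeff 1 := by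
      have := Hdvd i x x
      rwa [mul_inv_cancel] at this
    rw [MonoidAlgebra.coeff_smul_apply, MonoidAlgebra.coeff_sub, Finsupp.sub_apply]
    rw [hY, sum_single_apply]
    rw [MonoidAlgebra.coeff_smul_apply]
    rw [sigG_apply, smul_eq_mul, mul_one, nsmul_eq_mul]
    exact Int.mul_ediv_cancel' hdvd1
  have hmain : n • (Y * (1 - MonoidAlgebra.of ℤ Γ (h k))) = n • q i k := by
    rw [← smul_mul_assoc, hnY, sub_mul, smul_mul_assoc, sigG_mul_sub, smul_zero, sub_zero,
      ← hq i k]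
  apply MonoidAlgebra.coeff_injective; apply Finsupp.ext
  intro x
  have h1 := congrArg (fun f : ZG Γ => f.coeff x) hmain
  rw [MonoidAlgebra.coeff_smul_apply, MonoidAlgebra.coeff_smul_apply] at h1
  rw [nsmul_eq_mul, nsmul_eq_mul] at h1
  exact (mul_left_cancel₀ (Int.natCast_ne_zero.mpr hn.ne') h1).symm

end Helpers2

section Helpers3
set_option linter.unusedSectionVars false

variable {Γ : Type} [CommGroup Γ]

private lemma exists_combo {ι : Type} [Fintype ι] (f : ι → Γ)
    (hgen : Subgroup.closure (Set.range f) = ⊤) (g : Γ) :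
    ∃ x : ι → ZG Γ, ∑ i, (1 - MonoidAlgebra.of ℤ Γ (f i)) * x i
      = 1 - MonoidAlgebra.of ℤ Γ g := by
  have hg : (1 - MonoidAlgebra.of ℤ Γ g)
      ∈ Submodule.span (ZG Γ) (Set.range fun i => 1 - MonoidAlgebra.of ℤ Γ (f i)) := by
    have hmem : g ∈ Subgroup.closure (Set.range f) := by rw [hgen]; trivial
    induction hmem using Subgroup.closure_induction with
    | mem y hy =>
        obtain ⟨i, rfl⟩ := hy
        exact Submodule.subset_span ⟨i, rfl⟩
    | one => rw [map_one, sub_self]; exact Submodule.zero_mem _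
    | mul y z hy hz ihy ihz =>
        have key : (1 : ZG Γ) - MonoidAlgebra.of ℤ Γ (y*z)
            = (1 - MonoidAlgebra.of ℤ Γ y)
              + MonoidAlgebra.of ℤ Γ y * (1 - MonoidAlgebra.of ℤ Γ z) := by
          rw [map_mul]; ring
        rw [key]
        refine Submodule.add_mem _ ihy ?_
        have := Submodule.smul_mem _ (MonoidAlgebra.of ℤ Γ y) ihz
        rwa [smul_eq_mul] at this
    | inv y hy ihy =>
        have key : (1 : ZG Γ) - MonoidAlgebra.of ℤ Γ y⁻¹
            = (- MonoidAlgebra.of ℤ Γ y⁻¹) * (1 - MonoidAlgebra.of ℤ Γ y) := by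
          have : MonoidAlgebra.of ℤ Γ y⁻¹ * MonoidAlgebra.of ℤ Γ y = 1 := by
            rw [← map_mul, inv_mul_cancel, map_one]
          rw [neg_mul, mul_sub, mul_one, this]; ring
        rw [key]
        have := Submodule.smul_mem _ (- MonoidAlgebra.of ℤ Γ y⁻¹) ihy
        rwa [smul_eq_mul] at this
  obtain ⟨c, hc⟩ := (Submodule.mem_span_range_iff_exists_fun (ZG Γ)).mp hg
  refine ⟨c, ?_⟩
  rw [← hc]
  exact Finset.sum_congr rfl fun i _ => by rw [smul_eq_mul, mul_comm]

private lemma sum4_comm {α β γ δ M : Type} [Fintype α] [Fintype β] [Fintype γ] [Fintype δ]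
    [AddCommMonoid M] (f : α → β → γ → δ → M) :
    ∑ c : γ, ∑ d : δ, ∑ a : α, ∑ b : β, f a b c d
      = ∑ a : α, ∑ b : β, ∑ c : γ, ∑ d : δ, f a b c d := by
  calc ∑ c : γ, ∑ d : δ, ∑ a : α, ∑ b : β, f a b c d
      = ∑ c : γ, ∑ a : α, ∑ d : δ, ∑ b : β, f a b c d :=
        Finset.sum_congr rfl fun c _ => Finset.sum_comm
    _ = ∑ a : α, ∑ c : γ, ∑ d : δ, ∑ b : β, f a b c d := Finset.sum_comm
    _ = ∑ a : α, ∑ c : γ, ∑ b : β, ∑ d : δ, f a b c d :=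
        Finset.sum_congr rfl fun a _ => Finset.sum_congr rfl fun c _ => Finset.sum_comm
    _ = ∑ a : α, ∑ b : β, ∑ c : γ, ∑ d : δ, f a b c d :=
        Finset.sum_congr rfl fun a _ => Finset.sum_comm

private lemma comp_formula {A B C D E F : Type}
    [Fintype A] [Fintype B] [Fintype C] [Fintype D]
    (s : A → C → ZG Γ) (t : B → D → ZG Γ) (s2 : C → E → ZG Γ) (t2 : D → F → ZG Γ)
    (r : A → B → ZG Γ) (e : E) (f : F) :
    ∑ c : C, ∑ d : D, (∑ a : A, ∑ b : B, r a b * s a c * t b d) * s2 c e * t2 d f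
      = ∑ a : A, ∑ b : B, r a b * (∑ c : C, s a c * s2 c e) * (∑ d : D, t b d * t2 d f) := by
  simp only [Finset.sum_mul, Finset.mul_sum]
  rw [sum4_comm]
  refine Finset.sum_congr rfl fun a _ => Finset.sum_congr rfl fun b _ =>
    Finset.sum_comm.trans ?_
  exact Finset.sum_congr rfl fun d _ => Finset.sum_congr rfl fun c _ => by ring

private lemma comp_rel {A C E : Type} [Fintype A] [Fintype C]
    (w : A → ZG Γ) (w' : C → ZG Γ) (w'' : E → ZG Γ)
    (s : A → C → ZG Γ) (s2 : C → E → ZG Γ)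
    (hs : ∀ c, ∑ a, w a * s a c = w' c)
    (hs2 : ∀ e, ∑ c, w' c * s2 c e = w'' e)
    (e : E) : ∑ a, w a * (∑ c, s a c * s2 c e) = w'' e := by
  rw [← hs2 e]
  calc ∑ a, w a * (∑ c, s a c * s2 c e)
      = ∑ a, ∑ c, w a * s a c * s2 c e := by
        exact Finset.sum_congr rfl fun a _ => by
          rw [Finset.mul_sum]
          exact Finset.sum_congr rfl fun c _ => by ring
    _ = ∑ c, ∑ a, w a * s a c * s2 c e := Finset.sum_comm
    _ = ∑ c, (∑ a, w a * s a c) * s2 c e := by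
        exact Finset.sum_congr rfl fun c _ => by rw [Finset.sum_mul]
    _ = ∑ c, w' c * s2 c e := by
        exact Finset.sum_congr rfl fun c _ => by rw [hs c]

private lemma master {A B C D : Type} [Fintype A] [Fintype B]
    (μ : A ⊕ B → Γ) (ν : C ⊕ D → Γ)
    (s : A → C → ZG Γ) (t : B → D → ZG Γ)
    (hs : ∀ c, ∑ a : A, (1 - MonoidAlgebra.of ℤ Γ (μ (Sum.inl a))) * s a c
            = 1 - MonoidAlgebra.of ℤ Γ (ν (Sum.inl c)))
    (ht : ∀ d, ∑ b : B, (1 - MonoidAlgebra.of ℤ Γ (μ (Sum.inr b))) * t b d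
            = 1 - MonoidAlgebra.of ℤ Γ (ν (Sum.inr d)))
    (n : ℕ) (r : A → B → ZG Γ) (α : A → ZG Γ) (β : B → ZG Γ)
    (hr : ∀ a b, n • r a b
        = α a * (1 - MonoidAlgebra.of ℤ Γ (μ (Sum.inr b)))
          + β b * (1 - MonoidAlgebra.of ℤ Γ (μ (Sum.inl a))))
    (c : C) (d : D) :
    n • (∑ a : A, ∑ b : B, r a b * s a c * t b d)
      = (∑ a : A, α a * s a c) * (1 - MonoidAlgebra.of ℤ Γ (ν (Sum.inr d)))
        + (∑ b : B, β b * t b d) * (1 - MonoidAlgebra.of ℤ Γ (ν (Sum.inl c))) := by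
  rw [← ht d, ← hs c, Finset.sum_mul_sum, Finset.sum_mul_sum]
  rw [show (∑ b : B, ∑ a : A, β b * t b d * ((1 - MonoidAlgebra.of ℤ Γ (μ (Sum.inl a))) * s a c))
      = ∑ a : A, ∑ b : B, β b * t b d * ((1 - MonoidAlgebra.of ℤ Γ (μ (Sum.inl a))) * s a c)
    from Finset.sum_comm]
  rw [← Finset.sum_add_distrib, Finset.smul_sum]
  refine Finset.sum_congr rfl fun a _ => ?_
  rw [← Finset.sum_add_distrib, Finset.smul_sum]
  refine Finset.sum_congr rfl fun b _ => ?_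
  rw [← smul_mul_assoc, ← smul_mul_assoc, hr a b]
  ring

end Helpers3

section Helpers4
set_option linter.unusedSectionVars false

variable {Γ : Type} [CommGroup Γ]

private lemma endo_id {A B : Type} [Fintype A] [Fintype B] [Fintype Γ]
    (μ : A ⊕ B → Γ)
    (hA : Subgroup.closure (Set.range fun a : A => μ (Sum.inl a)) = ⊤)
    (hB : Subgroup.closure (Set.range fun b : B => μ (Sum.inr b)) = ⊤)
    (S : A → A → ZG Γ) (T : B → B → ZG Γ)
    (hS : ∀ a', ∑ a : A, (1 - MonoidAlgebra.of ℤ Γ (μ (Sum.inl a))) * S a a'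
            = 1 - MonoidAlgebra.of ℤ Γ (μ (Sum.inl a')))
    (hT : ∀ b', ∑ b : B, (1 - MonoidAlgebra.of ℤ Γ (μ (Sum.inr b))) * T b b'
            = 1 - MonoidAlgebra.of ℤ Γ (μ (Sum.inr b')))
    (n : ℕ) (hn : 0 < n) (r : A → B → ZG Γ) (α : A → ZG Γ) (β : B → ZG Γ)
    (hr : ∀ a b, n • r a b
        = α a * (1 - MonoidAlgebra.of ℤ Γ (μ (Sum.inr b)))
          + β b * (1 - MonoidAlgebra.of ℤ Γ (μ (Sum.inl a)))) :
    ∃ (Y : A → ZG Γ) (Z : B → ZG Γ), ∀ a b,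
      (∑ a₀ : A, ∑ b₀ : B, r a₀ b₀ * S a₀ a * T b₀ b) - r a b
        = Y a * (1 - MonoidAlgebra.of ℤ Γ (μ (Sum.inr b)))
          + Z b * (1 - MonoidAlgebra.of ℤ Γ (μ (Sum.inl a))) := by
  set r1 : A → B → ZG Γ := fun a' b => ∑ a : A, r a b * S a a' with hr1def
  set α1 : A → ZG Γ := fun a' => ∑ a : A, α a * S a a' with hα1
  have step1 : ∀ a' b, n • r1 a' b
      = α1 a' * (1 - MonoidAlgebra.of ℤ Γ (μ (Sum.inr b)))
        + β b * (1 - MonoidAlgebra.of ℤ Γ (μ (Sum.inl a'))) := by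
    intro a' b
    rw [hr1def, hα1]
    simp only
    rw [Finset.smul_sum, Finset.sum_mul, ← hS a', Finset.mul_sum, ← Finset.sum_add_distrib]
    refine Finset.sum_congr rfl fun a _ => ?_
    rw [← smul_mul_assoc, hr a b]
    ring
  have step2 : ∀ a' b, n • (r1 a' b - r a' b)
      = (α1 a' - α a') * (1 - MonoidAlgebra.of ℤ Γ (μ (Sum.inr b))) := by
    intro a' b
    rw [smul_sub, step1, hr a' b, sub_mul]
    ring
  obtain ⟨Y, hY⟩ := key_purify (fun b : B => μ (Sum.inr b)) hB
    (fun a' b => r1 a' b - r a' b) (fun a' => α1 a' - α a') n hn step2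
  set r2 : A → B → ZG Γ := fun a' b' => ∑ b : B, r1 a' b * T b b' with hr2def
  set β1 : B → ZG Γ := fun b' => ∑ b : B, β b * T b b' with hβ1
  have step3 : ∀ a' b', n • r2 a' b'
      = α1 a' * (1 - MonoidAlgebra.of ℤ Γ (μ (Sum.inr b')))
        + β1 b' * (1 - MonoidAlgebra.of ℤ Γ (μ (Sum.inl a'))) := by
    intro a' b'
    have e1 : n • r2 a' b'
        = ∑ b : B, (α1 a' * ((1 - MonoidAlgebra.of ℤ Γ (μ (Sum.inr b))) * T b b')
            + β b * T b b' * (1 - MonoidAlgebra.of ℤ Γ (μ (Sum.inl a')))) := by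
      rw [hr2def]
      simp only
      rw [Finset.smul_sum]
      refine Finset.sum_congr rfl fun b _ => ?_
      rw [← smul_mul_assoc, step1 a' b]
      ring
    rw [e1, Finset.sum_add_distrib, ← Finset.mul_sum, ← Finset.sum_mul, hT b', hβ1]
  have step4 : ∀ b' a', n • (r2 a' b' - r1 a' b')
      = (β1 b' - β b') * (1 - MonoidAlgebra.of ℤ Γ (μ (Sum.inl a'))) := by
    intro b' a'
    rw [smul_sub, step3, step1 a' b', sub_mul]
    ring
  obtain ⟨Z, hZ⟩ := key_purify (fun a : A => μ (Sum.inl a)) hA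
    (fun b' a' => r2 a' b' - r1 a' b') (fun b' => β1 b' - β b') n hn step4
  refine ⟨Y, Z, fun a b => ?_⟩
  have hsum : (∑ a₀ : A, ∑ b₀ : B, r a₀ b₀ * S a₀ a * T b₀ b) = r2 a b := by
    rw [hr2def]
    simp only
    rw [Finset.sum_comm]
    refine Finset.sum_congr rfl fun b₀ _ => ?_
    rw [hr1def]
    simp only
    rw [Finset.sum_mul]
  rw [hsum, show r2 a b - r a b = (r2 a b - r1 a b) + (r1 a b - r a b) by ring,
    hZ b a, hY a b]
  ring

private lemma torsion_map {M N : Type} [AddCommGroup M] [AddCommGroup N] (f : M →+ N)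
    {x : M} (hx : x ∈ AddCommGroup.torsion M) : f x ∈ AddCommGroup.torsion N := by
  obtain ⟨n, hn, h⟩ := isOfFinAddOrder_iff_nsmul_eq_zero.mp hx
  exact isOfFinAddOrder_iff_nsmul_eq_zero.mpr ⟨n, hn, by rw [← map_nsmul, h, map_zero]⟩

end Helpers4

section MemSup
set_option linter.unusedSectionVars false

private lemma mem_sup_iff {Γ : Type} [CommGroup Γ] {A B : Type} (μ : A ⊕ B → Γ)
    (r : A → B → ZG Γ) :
    r ∈ calA Γ A B μ ⊔ calB Γ A B μ
      ↔ ∃ (α : A → ZG Γ) (β : B → ZG Γ), ∀ a b,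
          r a b = α a * (1 - MonoidAlgebra.of ℤ Γ (μ (Sum.inr b)))
            + β b * (1 - MonoidAlgebra.of ℤ Γ (μ (Sum.inl a))) := by
  rw [AddSubgroup.mem_sup]
  constructor
  · rintro ⟨y, hy, z, hz, hyz⟩
    obtain ⟨α, hy⟩ := hy
    obtain ⟨β, hz⟩ := hz
    exact ⟨α, β, fun a b => by rw [← hyz]; simp [hy a b, hz a b]⟩
  · rintro ⟨α, β, h⟩
    refine ⟨fun a b => α a * (1 - MonoidAlgebra.of ℤ Γ (μ (Sum.inr b))), ⟨α, fun a b => rfl⟩,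
      fun a b => β b * (1 - MonoidAlgebra.of ℤ Γ (μ (Sum.inl a))), ⟨β, fun a b => rfl⟩, ?_⟩
    funext a b
    exact (h a b).symm

end MemSup

/-- Lemma 2.2 (torsioniso).  Given a second pair of data (C, D, ν) and elements
s(a,c), t(b,d) ∈ ℤ[G] satisfying Σ_a (e − μ(a))s(a,c) = e − ν(c) and
Σ_b (e − μ(b))t(b,d) = e − ν(d), the map π(r)(c,d) = Σ_{a,b} r(a,b)s(a,c)t(b,d)
carries 𝒜 + ℬ into 𝒞 + 𝒟, hence induces a homomorphism π̃ : N(A,B) → N(C,D)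
with π̃ ∘ ρ_{A,B} = ρ_{C,D} ∘ π, and π̃ restricts to a bijection (isomorphism)
from the torsion subgroup of N(A,B) onto the torsion subgroup of N(C,D). -/
theorem statement2
    (G : Type) [CommGroup G] [Fintype G]
    (A B C D : Type) [Fintype A] [Fintype B] [Fintype C] [Fintype D]
    (μ : A ⊕ B → G) (ν : C ⊕ D → G)
    (hA : Subgroup.closure (Set.range fun a : A => μ (Sum.inl a)) = ⊤)
    (hB : Subgroup.closure (Set.range fun b : B => μ (Sum.inr b)) = ⊤)
    (hC : Subgroup.closure (Set.range fun c : C => ν (Sum.inl c)) = ⊤)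
    (hD : Subgroup.closure (Set.range fun d : D => ν (Sum.inr d)) = ⊤)
    (s : A → C → ZG G) (t : B → D → ZG G)
    (hs : ∀ c, ∑ a : A, (1 - MonoidAlgebra.of ℤ G (μ (Sum.inl a))) * s a c
            = 1 - MonoidAlgebra.of ℤ G (ν (Sum.inl c)))
    (ht : ∀ d, ∑ b : B, (1 - MonoidAlgebra.of ℤ G (μ (Sum.inr b))) * t b d
            = 1 - MonoidAlgebra.of ℤ G (ν (Sum.inr d))) :
    (∀ r ∈ calA G A B μ ⊔ calB G A B μ,
        (fun c d => ∑ a : A, ∑ b : B, r a b * s a c * t b d) ∈ calA G C D ν ⊔ calB G C D ν)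
    ∧
    ∃ πt : ((A → B → ZG G) ⧸ (calA G A B μ ⊔ calB G A B μ)) →+
             ((C → D → ZG G) ⧸ (calA G C D ν ⊔ calB G C D ν)),
      (∀ r : A → B → ZG G,
          πt (QuotientAddGroup.mk r)
            = QuotientAddGroup.mk (fun c d => ∑ a : A, ∑ b : B, r a b * s a c * t b d))
      ∧
      Set.BijOn πt
        (AddCommGroup.torsion ((A → B → ZG G) ⧸ (calA G A B μ ⊔ calB G A B μ)) : Set _)
        (AddCommGroup.torsion ((C → D → ZG G) ⧸ (calA G C D ν ⊔ calB G C D ν)) : Set _) := by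
  classical
  -- Part 1: the map carries 𝒜 ⊔ ℬ into 𝒞 ⊔ 𝒟.
  have part1 : ∀ r ∈ calA G A B μ ⊔ calB G A B μ,
      (fun c d => ∑ a : A, ∑ b : B, r a b * s a c * t b d) ∈ calA G C D ν ⊔ calB G C D ν := by
    intro r hr
    obtain ⟨α, β, h⟩ := (mem_sup_iff μ r).mp hr
    refine (mem_sup_iff ν _).mpr
      ⟨fun c => ∑ a : A, α a * s a c, fun d => ∑ b : B, β b * t b d, fun c d => ?_⟩
    have hm := master μ ν s t hs ht 1 r α β
      (fun a b => by rw [one_smul]; exact h a b) c d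
    rwa [one_smul] at hm
  -- The forward homomorphism.
  let Pmap : (A → B → ZG G) →+ (C → D → ZG G) :=
    { toFun := fun r => fun c d => ∑ a : A, ∑ b : B, r a b * s a c * t b d
      map_zero' := by funext c d; simp
      map_add' := fun r r' => by
        funext c d
        simp only [Pi.add_apply, add_mul, Finset.sum_add_distrib] }
  have hle : calA G A B μ ⊔ calB G A B μ
      ≤ (calA G C D ν ⊔ calB G C D ν).comap Pmap := fun r hr => part1 r hr
  -- Reverse data s2, t2.
  have hs2ex : ∀ a : A, ∃ x : C → ZG G,
      ∑ c : C, (1 - MonoidAlgebra.of ℤ G (ν (Sum.inl c))) * x c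
        = 1 - MonoidAlgebra.of ℤ G (μ (Sum.inl a)) :=
    fun a => exists_combo _ hC _
  choose s2f hs2 using hs2ex
  set s2 : C → A → ZG G := fun c a => s2f a c with hs2def
  have ht2ex : ∀ b : B, ∃ x : D → ZG G,
      ∑ d : D, (1 - MonoidAlgebra.of ℤ G (ν (Sum.inr d))) * x d
        = 1 - MonoidAlgebra.of ℤ G (μ (Sum.inr b)) :=
    fun b => exists_combo _ hD _
  choose t2f ht2 using ht2ex
  set t2 : D → B → ZG G := fun d b => t2f b d with ht2def
  have hs2' : ∀ a : A, ∑ c : C, (1 - MonoidAlgebra.of ℤ G (ν (Sum.inl c))) * s2 c a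
      = 1 - MonoidAlgebra.of ℤ G (μ (Sum.inl a)) := hs2
  have ht2' : ∀ b : B, ∑ d : D, (1 - MonoidAlgebra.of ℤ G (ν (Sum.inr d))) * t2 d b
      = 1 - MonoidAlgebra.of ℤ G (μ (Sum.inr b)) := ht2
  -- The reverse homomorphism.
  have part1' : ∀ r' ∈ calA G C D ν ⊔ calB G C D ν,
      (fun a b => ∑ c : C, ∑ d : D, r' c d * s2 c a * t2 d b)
        ∈ calA G A B μ ⊔ calB G A B μ := by
    intro r' hr'
    obtain ⟨γ, δ, h⟩ := (mem_sup_iff ν r').mp hr'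
    refine (mem_sup_iff μ _).mpr
      ⟨fun a => ∑ c : C, γ c * s2 c a, fun b => ∑ d : D, δ d * t2 d b, fun a b => ?_⟩
    have hm := master ν μ s2 t2 hs2' ht2' 1 r' γ δ
      (fun c d => by rw [one_smul]; exact h c d) a b
    rwa [one_smul] at hm
  let Qmap : (C → D → ZG G) →+ (A → B → ZG G) :=
    { toFun := fun r' => fun a b => ∑ c : C, ∑ d : D, r' c d * s2 c a * t2 d b
      map_zero' := by funext a b; simp
      map_add' := fun r r' => by
        funext a b
        simp only [Pi.add_apply, add_mul, Finset.sum_add_distrib] }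
  have hle' : calA G C D ν ⊔ calB G C D ν
      ≤ (calA G A B μ ⊔ calB G A B μ).comap Qmap := fun r hr => part1' r hr
  -- Induced maps on the quotients.
  let πt := QuotientAddGroup.map _ _ Pmap hle
  let πt' := QuotientAddGroup.map _ _ Qmap hle'
  have πt_mk : ∀ r : A → B → ZG G,
      πt (QuotientAddGroup.mk r) = QuotientAddGroup.mk (Pmap r) :=
    fun r => QuotientAddGroup.map_mk _ _ _ _ r
  have πt'_mk : ∀ r : C → D → ZG G,
      πt' (QuotientAddGroup.mk r) = QuotientAddGroup.mk (Qmap r) :=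
    fun r => QuotientAddGroup.map_mk _ _ _ _ r
  -- Composite relation data.
  have hcompS : ∀ a' : A, ∑ a : A,
      (1 - MonoidAlgebra.of ℤ G (μ (Sum.inl a))) * (∑ c : C, s a c * s2 c a')
        = 1 - MonoidAlgebra.of ℤ G (μ (Sum.inl a')) :=
    fun a' => comp_rel _ _ _ s s2 hs hs2' a'
  have hcompT : ∀ b' : B, ∑ b : B,
      (1 - MonoidAlgebra.of ℤ G (μ (Sum.inr b))) * (∑ d : D, t b d * t2 d b')
        = 1 - MonoidAlgebra.of ℤ G (μ (Sum.inr b')) :=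
    fun b' => comp_rel _ _ _ t t2 ht ht2' b'
  have hcompS' : ∀ c' : C, ∑ c : C,
      (1 - MonoidAlgebra.of ℤ G (ν (Sum.inl c))) * (∑ a : A, s2 c a * s a c')
        = 1 - MonoidAlgebra.of ℤ G (ν (Sum.inl c')) :=
    fun c' => comp_rel _ _ _ s2 s hs2' hs c'
  have hcompT' : ∀ d' : D, ∑ d : D,
      (1 - MonoidAlgebra.of ℤ G (ν (Sum.inr d))) * (∑ b : B, t2 d b * t b d')
        = 1 - MonoidAlgebra.of ℤ G (ν (Sum.inr d')) :=
    fun d' => comp_rel _ _ _ t2 t ht2' ht d'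
  -- Round trips on torsion.
  have round1 : ∀ x ∈ AddCommGroup.torsion
      ((A → B → ZG G) ⧸ (calA G A B μ ⊔ calB G A B μ)), πt' (πt x) = x := by
    intro x hx
    obtain ⟨r, rfl⟩ := QuotientAddGroup.mk_surjective x
    obtain ⟨n, hn, hnx⟩ := isOfFinAddOrder_iff_nsmul_eq_zero.mp hx
    have hmem : n • r ∈ calA G A B μ ⊔ calB G A B μ := by
      rw [← QuotientAddGroup.eq_zero_iff]
      have : (QuotientAddGroup.mk (n • r) :
          (A → B → ZG G) ⧸ (calA G A B μ ⊔ calB G A B μ))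
            = n • QuotientAddGroup.mk r := by
        rw [← QuotientAddGroup.mk'_apply, map_nsmul, QuotientAddGroup.mk'_apply]
      rw [this]
      exact hnx
    obtain ⟨α, β, hαβ⟩ := (mem_sup_iff μ _).mp hmem
    have hr' : ∀ a b, n • r a b
        = α a * (1 - MonoidAlgebra.of ℤ G (μ (Sum.inr b)))
          + β b * (1 - MonoidAlgebra.of ℤ G (μ (Sum.inl a))) := by
      intro a b
      have h1 := hαβ a b
      simpa using h1
    obtain ⟨Y, Z, hYZ⟩ := endo_id μ hA hB
      (fun a a' => ∑ c : C, s a c * s2 c a')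
      (fun b b' => ∑ d : D, t b d * t2 d b')
      hcompS hcompT n hn r α β hr'
    have hdiff : Qmap (Pmap r) - r ∈ calA G A B μ ⊔ calB G A B μ := by
      refine (mem_sup_iff μ _).mpr ⟨Y, Z, fun a b => ?_⟩
      have hq : Qmap (Pmap r) a b
          = ∑ a₀ : A, ∑ b₀ : B, r a₀ b₀ * (∑ c : C, s a₀ c * s2 c a)
              * (∑ d : D, t b₀ d * t2 d b) :=
        comp_formula s t s2 t2 r a b
      have : (Qmap (Pmap r) - r) a b = Qmap (Pmap r) a b - r a b := rfl
      rw [this, hq]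
      exact hYZ a b
    rw [πt_mk, πt'_mk]
    exact (QuotientAddGroup.eq_iff_sub_mem).mpr hdiff
  have round2 : ∀ y ∈ AddCommGroup.torsion
      ((C → D → ZG G) ⧸ (calA G C D ν ⊔ calB G C D ν)), πt (πt' y) = y := by
    intro y hy
    obtain ⟨r, rfl⟩ := QuotientAddGroup.mk_surjective y
    obtain ⟨n, hn, hny⟩ := isOfFinAddOrder_iff_nsmul_eq_zero.mp hy
    have hmem : n • r ∈ calA G C D ν ⊔ calB G C D ν := by
      rw [← QuotientAddGroup.eq_zero_iff]
      have : (QuotientAddGroup.mk (n • r) :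
          (C → D → ZG G) ⧸ (calA G C D ν ⊔ calB G C D ν))
            = n • QuotientAddGroup.mk r := by
        rw [← QuotientAddGroup.mk'_apply, map_nsmul, QuotientAddGroup.mk'_apply]
      rw [this]
      exact hny
    obtain ⟨γ, δ, hγδ⟩ := (mem_sup_iff ν _).mp hmem
    have hr' : ∀ c d, n • r c d
        = γ c * (1 - MonoidAlgebra.of ℤ G (ν (Sum.inr d)))
          + δ d * (1 - MonoidAlgebra.of ℤ G (ν (Sum.inl c))) := by
      intro c d
      have h1 := hγδ c d
      simpa using h1
    obtain ⟨Y, Z, hYZ⟩ := endo_id ν hC hD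
      (fun c c' => ∑ a : A, s2 c a * s a c')
      (fun d d' => ∑ b : B, t2 d b * t b d')
      hcompS' hcompT' n hn r γ δ hr'
    have hdiff : Pmap (Qmap r) - r ∈ calA G C D ν ⊔ calB G C D ν := by
      refine (mem_sup_iff ν _).mpr ⟨Y, Z, fun c d => ?_⟩
      have hq : Pmap (Qmap r) c d
          = ∑ c₀ : C, ∑ d₀ : D, r c₀ d₀ * (∑ a : A, s2 c₀ a * s a c)
              * (∑ b : B, t2 d₀ b * t b d) :=
        comp_formula s2 t2 s t r c d
      have : (Pmap (Qmap r) - r) c d = Pmap (Qmap r) c d - r c d := rfl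
      rw [this, hq]
      exact hYZ c d
    rw [πt'_mk, πt_mk]
    exact (QuotientAddGroup.eq_iff_sub_mem).mpr hdiff
  -- Assemble the answer.
  refine ⟨part1, πt, fun r => πt_mk r, ?_, ?_, ?_⟩
  · exact fun x hx => torsion_map πt hx
  · intro x hx y hy hxy
    rw [← round1 x hx, ← round1 y hy, hxy]
  · intro y hy
    exact ⟨πt' y, torsion_map πt' hy, round2 y hy⟩
end

section
/- Let C and D be further finite sets and ν : C ∪ D → G a map such that both ν(C) and ν(D) generate G, with N(C,D) defined analogously to N(A,B). Then the torsion subgroup T(N(A,B)) is isomorphic to the torsion subgroup T(N(C,D)); in other words, the torsion subgroup of N(A,B) depends, up to isomorphism, only on the finite abelian group G and not on the choice of A, B and μ. -/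
open MonoidAlgebra

variable (G : Type) [CommGroup G] (A B : Type)

section AuxGeneral

section General

variable {M K : Type*} [AddCommGroup M] [AddCommGroup K]

/-- An additive equivalence restricts to torsion subgroups. -/
noncomputable def torsionCongr (e : M ≃+ K) :
    AddCommGroup.torsion M ≃+ AddCommGroup.torsion K where
  toFun x := ⟨e x, e.toAddMonoidHom.isOfFinAddOrder x.2⟩
  invFun y := ⟨e.symm y, e.symm.toAddMonoidHom.isOfFinAddOrder y.2⟩
  left_inv x := by ext; simp
  right_inv y := by ext; simp
  map_add' x y := by ext; simp

/-- If `K` has trivial torsion, torsion of `M × K` is torsion of `M`. -/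
noncomputable def torsionProdOfTrivial
    (hK : ∀ y : K, IsOfFinAddOrder y → y = 0) :
    AddCommGroup.torsion (M × K) ≃+ AddCommGroup.torsion M where
  toFun x := ⟨x.1.1, (AddMonoidHom.fst M K).isOfFinAddOrder x.2⟩
  invFun m := ⟨(m.1, 0), by
    have h := m.2
    rw [AddCommGroup.mem_torsion, isOfFinAddOrder_iff_nsmul_eq_zero] at h ⊢
    obtain ⟨n, hn, hx⟩ := h
    exact ⟨n, hn, by simp [Prod.ext_iff, hx]⟩⟩
  left_inv x := by
    ext
    · rfl
    · exact (hK _ ((AddMonoidHom.snd M K).isOfFinAddOrder x.2)).symm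
  right_inv m := rfl
  map_add' x y := rfl

/-- Quotient of a product by a product subgroup. -/
noncomputable def quotProdEquiv (S : AddSubgroup M) (T : AddSubgroup K) :
    (M × K) ⧸ (S.prod T) ≃+ (M ⧸ S) × (K ⧸ T) := by
  let f : M × K →+ (M ⧸ S) × (K ⧸ T) :=
    ((QuotientAddGroup.mk' S).comp (AddMonoidHom.fst M K)).prod
      ((QuotientAddGroup.mk' T).comp (AddMonoidHom.snd M K))
  have hker : f.ker = S.prod T := by
    ext ⟨m, k⟩
    simp [f, AddMonoidHom.mem_ker, Prod.ext_iff, QuotientAddGroup.eq_zero_iff,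
      AddSubgroup.mem_prod]
  have hsurj : Function.Surjective f := by
    rintro ⟨qa, qb⟩
    induction qa using QuotientAddGroup.induction_on with | H a =>
    induction qb using QuotientAddGroup.induction_on with | H b =>
    exact ⟨(a, b), rfl⟩
  exact (QuotientAddGroup.quotientAddEquivOfEq hker.symm).trans
    (QuotientAddGroup.quotientKerEquivOfSurjective f hsurj)

end General

end AuxGeneral


section GroupRing

variable {G : Type} [CommGroup G]

lemma aux_span {A : Type} [Fintype A] (f : A → G)
    (h : Subgroup.closure (Set.range f) = ⊤) (g : G) :
    ∃ c : A → ZG G,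
      (1 : ZG G) - MonoidAlgebra.of ℤ G g
        = ∑ a, c a * (1 - MonoidAlgebra.of ℤ G (f a)) := by
  set J : Ideal (ZG G) :=
    Ideal.span (Set.range fun a => (1 : ZG G) - MonoidAlgebra.of ℤ G (f a)) with hJ
  have key : ∀ g : G, (1 : ZG G) - MonoidAlgebra.of ℤ G g ∈ J := by
    let H : Subgroup G :=
      { carrier := {x | (1 : ZG G) - MonoidAlgebra.of ℤ G x ∈ J}
        one_mem' := by
          show (1 : ZG G) - MonoidAlgebra.of ℤ G 1 ∈ J
          rw [map_one, sub_self]; exact J.zero_mem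
        mul_mem' := by
          intro x y hx hy
          show (1 : ZG G) - MonoidAlgebra.of ℤ G (x * y) ∈ J
          have hxy : (1 : ZG G) - MonoidAlgebra.of ℤ G (x * y)
              = ((1 : ZG G) - MonoidAlgebra.of ℤ G x)
                + MonoidAlgebra.of ℤ G x * ((1 : ZG G) - MonoidAlgebra.of ℤ G y) := by
            rw [map_mul]; ring
          rw [hxy]
          exact J.add_mem hx (J.mul_mem_left _ hy)
        inv_mem' := by
          intro x hx
          show (1 : ZG G) - MonoidAlgebra.of ℤ G x⁻¹ ∈ J
          have hinv : MonoidAlgebra.of ℤ G x⁻¹ * MonoidAlgebra.of ℤ G x = 1 := by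
            rw [← map_mul, inv_mul_cancel, map_one]
          have hxi : (1 : ZG G) - MonoidAlgebra.of ℤ G x⁻¹
              = (- MonoidAlgebra.of ℤ G x⁻¹) * ((1 : ZG G) - MonoidAlgebra.of ℤ G x) := by
            linear_combination (-1 : ZG G) * hinv
          rw [hxi]
          exact J.mul_mem_left _ hx }
    have hsub : Set.range f ⊆ H := by
      rintro - ⟨a, rfl⟩
      exact Ideal.subset_span ⟨a, rfl⟩
    have : (⊤ : Subgroup G) ≤ H := h ▸ Subgroup.closure_le H |>.mpr hsub
    exact fun g => this (Subgroup.mem_top g)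
  have := key g
  rw [hJ, Ideal.mem_span_range_iff_exists_fun] at this
  obtain ⟨c, hc⟩ := this
  exact ⟨c, hc.symm⟩

variable [Fintype G]

noncomputable def sigmaZG (G : Type) [CommGroup G] [Fintype G] : ZG G :=
  ∑ g : G, MonoidAlgebra.single g 1

lemma sigmaZG_apply (h : G) : (sigmaZG G).coeff h = 1 := by
  rw [sigmaZG, coeff_sum, Finsupp.finset_sum_apply]
  simp [Finsupp.single_apply]

lemma sigmaZG_mul (g : G) : sigmaZG G * MonoidAlgebra.of ℤ G g = sigmaZG G := by
  ext h
  rw [MonoidAlgebra.of_apply, MonoidAlgebra.mul_single_apply]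
  simp [sigmaZG_apply]

lemma aux_smul_cancel {n : ℤ} (hn : n ≠ 0) {z : ZG G} (h : n • z = 0) : z = 0 := by
  ext g
  have h' : (n • z).coeff g = (0 : ZG G).coeff g := by rw [h]
  have h'' : n * z.coeff g = 0 := h'
  rcases mul_eq_zero.mp h'' with h3 | h3
  · exact absurd h3 hn
  · simpa using h3

lemma aux_div {B : Type} [Fintype B] (f : B → G)
    (h : Subgroup.closure (Set.range f) = ⊤) (n : ℤ) (hn : n ≠ 0)
    (s : ZG G) (x : B → ZG G)
    (hx : ∀ b, n • x b = s * (1 - MonoidAlgebra.of ℤ G (f b))) :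
    ∃ t : ZG G, ∀ b, x b = t * (1 - MonoidAlgebra.of ℤ G (f b)) := by
  -- Step 1: n divides s * (1 - of g) for every g
  have step1 : ∀ g : G, ∃ y : ZG G, s * (1 - MonoidAlgebra.of ℤ G g) = n • y := by
    let H : Subgroup G :=
      { carrier := {g | ∃ y : ZG G, s * (1 - MonoidAlgebra.of ℤ G g) = n • y}
        one_mem' := ⟨0, by rw [map_one, sub_self, mul_zero, smul_zero]⟩
        mul_mem' := by
          rintro g g' ⟨y, hy⟩ ⟨y', hy'⟩
          refine ⟨y + y' * MonoidAlgebra.of ℤ G g, ?_⟩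
          have expand : s * (1 - MonoidAlgebra.of ℤ G (g * g'))
              = s * (1 - MonoidAlgebra.of ℤ G g)
                + (s * (1 - MonoidAlgebra.of ℤ G g')) * MonoidAlgebra.of ℤ G g := by
            rw [map_mul]; ring
          rw [expand, hy, hy', smul_add, smul_mul_assoc]
        inv_mem' := by
          rintro g ⟨y, hy⟩
          refine ⟨-(y * MonoidAlgebra.of ℤ G g⁻¹), ?_⟩
          have hinv : MonoidAlgebra.of ℤ G g⁻¹ * MonoidAlgebra.of ℤ G g = 1 := by
            rw [← map_mul, inv_mul_cancel, map_one]
          have expand : s * (1 - MonoidAlgebra.of ℤ G g⁻¹)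
              = -((s * (1 - MonoidAlgebra.of ℤ G g)) * MonoidAlgebra.of ℤ G g⁻¹) := by
            linear_combination (-s : ZG G) * hinv
          rw [expand, hy, smul_mul_assoc, ← smul_neg] }
    have hsub : Set.range f ⊆ H := by
      rintro - ⟨b, rfl⟩
      exact ⟨x b, (hx b).symm⟩
    have htop : (⊤ : Subgroup G) ≤ H := h ▸ Subgroup.closure_le H |>.mpr hsub
    exact fun g => htop (Subgroup.mem_top g)
  -- Step 2: all coefficients of s are congruent mod n
  have step2 : ∀ g : G, n ∣ (s.coeff g - s.coeff 1) := by
    intro g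
    obtain ⟨y, hy⟩ := step1 g
    refine ⟨y.coeff g, ?_⟩
    have h2 : (s * (1 - MonoidAlgebra.of ℤ G g)).coeff g = (n • y).coeff g := by rw [hy]
    rw [mul_sub, mul_one] at h2
    rw [coeff_sub, Finsupp.sub_apply] at h2
    rw [MonoidAlgebra.of_apply, MonoidAlgebra.mul_single_apply, mul_inv_cancel, mul_one] at h2
    have h3 : (n • y).coeff g = n * y.coeff g := rfl
    rw [h3] at h2
    exact h2
  -- Step 3: split s = (s 1) • σ + n • t
  let t : ZG G := ofCoeff (Finsupp.equivFunOnFinite.symm (fun g => (s.coeff g - s.coeff 1) / n))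
  have hsplit : s = (s.coeff 1) • sigmaZG G + n • t := by
    ext g
    have ht : t.coeff g = (s.coeff g - s.coeff 1) / n := rfl
    have h4 : ((s.coeff 1) • sigmaZG G + n • t).coeff g = (s.coeff 1) * (sigmaZG G).coeff g + n * t.coeff g := rfl
    rw [h4, ht, sigmaZG_apply, Int.mul_ediv_cancel' (step2 g)]
    ring
  -- Step 4: conclude
  refine ⟨t, fun b => ?_⟩
  have hz : n • (x b - t * (1 - MonoidAlgebra.of ℤ G (f b))) = 0 := by
    have hσ : sigmaZG G * (1 - MonoidAlgebra.of ℤ G (f b)) = 0 := by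
      rw [mul_sub, mul_one, sigmaZG_mul, sub_self]
    have : s * (1 - MonoidAlgebra.of ℤ G (f b))
        = n • (t * (1 - MonoidAlgebra.of ℤ G (f b))) := by
      rw [hsplit, add_mul, smul_mul_assoc, hσ, smul_zero, zero_add, smul_mul_assoc]
    rw [smul_sub, hx b, this, sub_self]
  have := aux_smul_cancel hn hz
  rwa [sub_eq_zero] at this

end GroupRing

lemma aux_calA_torsionfree {G : Type} [CommGroup G] [Fintype G] {C B : Type} [Fintype C] [Fintype B]
    (μ : C ⊕ B → G)
    (hB : Subgroup.closure (Set.range fun b : B => μ (Sum.inr b)) = ⊤) :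
    ∀ y : (C → B → ZG G) ⧸ (calA G C B μ), IsOfFinAddOrder y → y = 0 := by
  intro y hy
  induction y using QuotientAddGroup.induction_on with | H x =>
  rw [isOfFinAddOrder_iff_nsmul_eq_zero] at hy
  obtain ⟨n, hn, hnx⟩ := hy
  rw [← QuotientAddGroup.mk_nsmul, QuotientAddGroup.eq_zero_iff] at hnx
  obtain ⟨α, hα⟩ := hnx
  have key : ∀ c, ∃ t : ZG G, ∀ b, x c b = t * (1 - MonoidAlgebra.of ℤ G (μ (Sum.inr b))) := by
    intro c
    refine aux_div (fun b => μ (Sum.inr b)) hB (n : ℤ) (by exact_mod_cast hn.ne') (α c)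
      (x c) (fun b => ?_)
    have := hα c b
    rw [← this]
    show (n : ℤ) • x c b = (n • x) c b
    rw [natCast_zsmul]
    rfl
  choose t ht using key
  rw [QuotientAddGroup.eq_zero_iff]
  exact ⟨t, ht⟩

section Moves

variable {G A B}

/-- Transposition. -/
noncomputable def transpQuotEquiv {A B : Type} (μ : A ⊕ B → G) (ν : B ⊕ A → G)
    (h1 : ∀ b, ν (Sum.inl b) = μ (Sum.inr b)) (h2 : ∀ a, ν (Sum.inr a) = μ (Sum.inl a)) :
    ((A → B → ZG G) ⧸ (calA G A B μ ⊔ calB G A B μ)) ≃+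
      ((B → A → ZG G) ⧸ (calA G B A ν ⊔ calB G B A ν)) := by
  let T : (A → B → ZG G) ≃+ (B → A → ZG G) :=
    { toFun := fun r b a => r a b
      invFun := fun r a b => r b a
      left_inv := fun r => rfl
      right_inv := fun r => rfl
      map_add' := fun r s => rfl }
  refine QuotientAddGroup.congr _ _ T ?_
  rw [AddSubgroup.map_sup]
  have e1 : AddSubgroup.map (T : (A → B → ZG G) →+ (B → A → ZG G)) (calA G A B μ) = calB G B A ν := by
    ext y
    constructor
    · rintro ⟨r, ⟨α, hα⟩, rfl⟩
      exact ⟨α, fun b a => by show r a b = _; simpa [h1] using hα a b⟩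
    · rintro ⟨β, hβ⟩
      exact ⟨fun a b => y b a, ⟨β, fun a b => by simpa [h1] using hβ b a⟩, rfl⟩
  have e2 : AddSubgroup.map (T : (A → B → ZG G) →+ (B → A → ZG G)) (calB G A B μ) = calA G B A ν := by
    ext y
    constructor
    · rintro ⟨r, ⟨β, hβ⟩, rfl⟩
      exact ⟨β, fun b a => by show r a b = _; simpa [h2] using hβ a b⟩
    · rintro ⟨α, hα⟩
      exact ⟨fun a b => y b a, ⟨α, fun a b => by simpa [h2] using hα b a⟩, rfl⟩
  rw [e1, e2, sup_comm]

/-- Relabelling of the first index set. -/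
noncomputable def relabelQuotEquiv {A C B : Type} (e : A ≃ C) (μ : A ⊕ B → G) (ν : C ⊕ B → G)
    (h1 : ∀ c, ν (Sum.inl c) = μ (Sum.inl (e.symm c))) (h2 : ∀ b, ν (Sum.inr b) = μ (Sum.inr b)) :
    ((A → B → ZG G) ⧸ (calA G A B μ ⊔ calB G A B μ)) ≃+
      ((C → B → ZG G) ⧸ (calA G C B ν ⊔ calB G C B ν)) := by
  let T : (A → B → ZG G) ≃+ (C → B → ZG G) :=
    { toFun := fun r c => r (e.symm c)
      invFun := fun r a => r (e a)
      left_inv := fun r => by funext a; simp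
      right_inv := fun r => by funext c; simp
      map_add' := fun r s => rfl }
  refine QuotientAddGroup.congr _ _ T ?_
  rw [AddSubgroup.map_sup]
  have e1 : AddSubgroup.map (T : (A → B → ZG G) →+ (C → B → ZG G)) (calA G A B μ) = calA G C B ν := by
    ext y
    constructor
    · rintro ⟨r, ⟨α, hα⟩, rfl⟩
      exact ⟨fun c => α (e.symm c), fun c b => by show r (e.symm c) b = _; simpa [h2] using hα (e.symm c) b⟩
    · rintro ⟨α, hα⟩
      refine ⟨fun a b => y (e a) b, ⟨fun a => α (e a), fun a b => by simpa [h2] using hα (e a) b⟩, ?_⟩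
      funext c; show y (e (e.symm c)) = y c; simp
  have e2 : AddSubgroup.map (T : (A → B → ZG G) →+ (C → B → ZG G)) (calB G A B μ) = calB G C B ν := by
    ext y
    constructor
    · rintro ⟨r, ⟨β, hβ⟩, rfl⟩
      refine ⟨β, fun c b => ?_⟩
      have := hβ (e.symm c) b
      rw [h1]
      exact this
    · rintro ⟨β, hβ⟩
      refine ⟨fun a b => y (e a) b, ⟨β, fun a b => ?_⟩, ?_⟩
      · have := hβ (e a) b
        rw [h1] at this
        simpa using this
      · funext c; show y (e (e.symm c)) = y c; simp
  rw [e1, e2]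

end Moves

section Step

variable {G} [Fintype G] {A B}

noncomputable def stepA {A C B : Type} [Fintype A] [Fintype C] [Fintype B]
    (lam : (A ⊕ C) ⊕ B → G) (mu : A ⊕ B → G) (muC : C ⊕ B → G)
    (hcl : ∀ a, lam (Sum.inl (Sum.inl a)) = mu (Sum.inl a))
    (hcc : ∀ c, lam (Sum.inl (Sum.inr c)) = muC (Sum.inl c))
    (hcr : ∀ b, lam (Sum.inr b) = mu (Sum.inr b))
    (hcr' : ∀ b, muC (Sum.inr b) = mu (Sum.inr b))
    (hspan : ∀ c : C, ∃ kk : A → ZG G,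
      (1 : ZG G) - MonoidAlgebra.of ℤ G (muC (Sum.inl c))
        = ∑ a, kk a * (1 - MonoidAlgebra.of ℤ G (mu (Sum.inl a))))
    (hB : Subgroup.closure (Set.range fun b : B => mu (Sum.inr b)) = ⊤) :
    AddCommGroup.torsion (((A ⊕ C) → B → ZG G) ⧸ (calA G (A ⊕ C) B lam ⊔ calB G (A ⊕ C) B lam)) ≃+
      AddCommGroup.torsion ((A → B → ZG G) ⧸ (calA G A B mu ⊔ calB G A B mu)) := by
  classical
  choose kk hkk using hspan
  let Φ : ((A ⊕ C) → B → ZG G) ≃+ ((A → B → ZG G) × (C → B → ZG G)) :=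
    { toFun := fun r =>
        (fun a b => r (Sum.inl a) b,
         fun c b => r (Sum.inr c) b - ∑ a, kk c a * r (Sum.inl a) b)
      invFun := fun p x b =>
        Sum.rec (fun a => p.1 a b) (fun c => p.2 c b + ∑ a, kk c a * p.1 a b) x
      left_inv := by
        intro r; funext x b; cases x with
        | inl a => rfl
        | inr c => show (r (Sum.inr c) b - ∑ a, kk c a * r (Sum.inl a) b)
                      + ∑ a, kk c a * r (Sum.inl a) b = r (Sum.inr c) b
                   exact sub_add_cancel _ _
      right_inv := by
        intro p
        refine Prod.ext rfl ?_
        funext c b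
        show (p.2 c b + ∑ a, kk c a * p.1 a b) - ∑ a, kk c a * p.1 a b = p.2 c b
        exact add_sub_cancel_right _ _
      map_add' := by
        intro r s
        refine Prod.ext rfl ?_
        funext c b
        show (r (Sum.inr c) b + s (Sum.inr c) b)
            - ∑ a, kk c a * (r (Sum.inl a) b + s (Sum.inl a) b)
          = (r (Sum.inr c) b - ∑ a, kk c a * r (Sum.inl a) b)
            + (s (Sum.inr c) b - ∑ a, kk c a * s (Sum.inl a) b)
        rw [Finset.sum_congr rfl (fun a _ => mul_add (kk c a) (r (Sum.inl a) b) (s (Sum.inl a) b)),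
          Finset.sum_add_distrib]
        ring }
  -- the image of the subgroup
  have himg : AddSubgroup.map (Φ : ((A ⊕ C) → B → ZG G) →+ _)
      (calA G (A ⊕ C) B lam ⊔ calB G (A ⊕ C) B lam)
      = (calA G A B mu ⊔ calB G A B mu).prod (calA G C B muC) := by
    apply le_antisymm
    · rintro y ⟨r, hr, rfl⟩
      obtain ⟨s, hs, t, ht, rfl⟩ := AddSubgroup.mem_sup.mp hr
      obtain ⟨α, hα⟩ := hs
      obtain ⟨β, hβ⟩ := ht
      rw [AddSubgroup.mem_prod]
      constructor
      · -- first component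
        show (fun a b => (s + t) (Sum.inl a) b) ∈ calA G A B mu ⊔ calB G A B mu
        rw [AddSubgroup.mem_sup]
        refine ⟨fun a b => α (Sum.inl a) * (1 - MonoidAlgebra.of ℤ G (mu (Sum.inr b))),
          ⟨fun a => α (Sum.inl a), fun a b => rfl⟩,
          fun a b => β b * (1 - MonoidAlgebra.of ℤ G (mu (Sum.inl a))),
          ⟨β, fun a b => rfl⟩, ?_⟩
        funext a b
        show α (Sum.inl a) * (1 - MonoidAlgebra.of ℤ G (mu (Sum.inr b)))
            + β b * (1 - MonoidAlgebra.of ℤ G (mu (Sum.inl a)))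
          = s (Sum.inl a) b + t (Sum.inl a) b
        rw [hα, hβ, hcr, hcl]
      · -- second component
        show (fun c b => (s + t) (Sum.inr c) b - ∑ a, kk c a * (s + t) (Sum.inl a) b)
            ∈ calA G C B muC
        refine ⟨fun c => α (Sum.inr c) - ∑ a, kk c a * α (Sum.inl a), fun c b => ?_⟩
        show (s (Sum.inr c) b + t (Sum.inr c) b)
            - ∑ a, kk c a * (s (Sum.inl a) b + t (Sum.inl a) b)
          = (α (Sum.inr c) - ∑ a, kk c a * α (Sum.inl a))
              * (1 - MonoidAlgebra.of ℤ G (muC (Sum.inr b)))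
        have hsum : ∑ a, kk c a * (s (Sum.inl a) b + t (Sum.inl a) b)
            = (∑ a, kk c a * α (Sum.inl a)) * (1 - MonoidAlgebra.of ℤ G (mu (Sum.inr b)))
              + β b * ∑ a, kk c a * (1 - MonoidAlgebra.of ℤ G (mu (Sum.inl a))) := by
          rw [Finset.sum_mul, Finset.mul_sum, ← Finset.sum_add_distrib]
          refine Finset.sum_congr rfl (fun a _ => ?_)
          rw [hα, hβ, hcr, hcl]
          ring
        rw [hsum, hα (Sum.inr c) b, hβ (Sum.inr c) b, hcr, hcc, ← hkk c, hcr' b]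
        ring
    · rintro ⟨y₁, y₂⟩ hy
      rw [AddSubgroup.mem_prod] at hy
      obtain ⟨hy1, hy2⟩ := hy
      obtain ⟨s₁, hs₁, t₁, ht₁, hsum1⟩ := AddSubgroup.mem_sup.mp hy1
      obtain ⟨α₁, hα₁⟩ := hs₁
      obtain ⟨β, hβ⟩ := ht₁
      obtain ⟨γ, hγ'⟩ := hy2
      have hγ : ∀ c b, y₂ c b = γ c * (1 - MonoidAlgebra.of ℤ G (muC (Sum.inr b))) := hγ'
      have hsum1' : s₁ + t₁ = y₁ := hsum1
      have hy1' : ∀ a b, y₁ a b = α₁ a * (1 - MonoidAlgebra.of ℤ G (mu (Sum.inr b)))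
          + β b * (1 - MonoidAlgebra.of ℤ G (mu (Sum.inl a))) := by
        intro a b
        rw [← hsum1']
        show s₁ a b + t₁ a b = _
        rw [hα₁ a b, hβ a b]
      let αf : A ⊕ C → ZG G := Sum.elim α₁ (fun c => γ c + ∑ a, kk c a * α₁ a)
      let r : (A ⊕ C) → B → ZG G := fun x b =>
        αf x * (1 - MonoidAlgebra.of ℤ G (lam (Sum.inr b)))
          + β b * (1 - MonoidAlgebra.of ℤ G (lam (Sum.inl x)))
      have hrmem : r ∈ calA G (A ⊕ C) B lam ⊔ calB G (A ⊕ C) B lam := by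
        rw [AddSubgroup.mem_sup]
        exact ⟨fun x b => αf x * (1 - MonoidAlgebra.of ℤ G (lam (Sum.inr b))),
          ⟨αf, fun x b => rfl⟩,
          fun x b => β b * (1 - MonoidAlgebra.of ℤ G (lam (Sum.inl x))),
          ⟨β, fun x b => rfl⟩, rfl⟩
      refine ⟨r, hrmem, ?_⟩
      refine Prod.ext ?_ ?_
      · funext a b
        show αf (Sum.inl a) * (1 - MonoidAlgebra.of ℤ G (lam (Sum.inr b)))
            + β b * (1 - MonoidAlgebra.of ℤ G (lam (Sum.inl (Sum.inl a)))) = y₁ a b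
        rw [hcr, hcl, hy1' a b]
        rfl
      · funext c b
        show r (Sum.inr c) b - ∑ a, kk c a * r (Sum.inl a) b = y₂ c b
        have hra : ∀ a, r (Sum.inl a) b = α₁ a * (1 - MonoidAlgebra.of ℤ G (mu (Sum.inr b)))
            + β b * (1 - MonoidAlgebra.of ℤ G (mu (Sum.inl a))) := by
          intro a
          show αf (Sum.inl a) * (1 - MonoidAlgebra.of ℤ G (lam (Sum.inr b)))
              + β b * (1 - MonoidAlgebra.of ℤ G (lam (Sum.inl (Sum.inl a)))) = _
          rw [hcr, hcl]
          rfl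
        have hrc : r (Sum.inr c) b
            = (γ c + ∑ a, kk c a * α₁ a) * (1 - MonoidAlgebra.of ℤ G (mu (Sum.inr b)))
              + β b * (1 - MonoidAlgebra.of ℤ G (muC (Sum.inl c))) := by
          show αf (Sum.inr c) * (1 - MonoidAlgebra.of ℤ G (lam (Sum.inr b)))
              + β b * (1 - MonoidAlgebra.of ℤ G (lam (Sum.inl (Sum.inr c)))) = _
          rw [hcr, hcc]
          rfl
        have hsum2 : ∑ a, kk c a * r (Sum.inl a) b
            = (∑ a, kk c a * α₁ a) * (1 - MonoidAlgebra.of ℤ G (mu (Sum.inr b)))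
              + β b * ∑ a, kk c a * (1 - MonoidAlgebra.of ℤ G (mu (Sum.inl a))) := by
          rw [Finset.sum_mul, Finset.mul_sum, ← Finset.sum_add_distrib]
          refine Finset.sum_congr rfl (fun a _ => ?_)
          rw [hra a]
          ring
        rw [hrc, hsum2, ← hkk c, hγ c b, hcr' b]
        ring
  -- assemble
  refine (torsionCongr (QuotientAddGroup.congr _ _ Φ himg)).trans ?_
  refine (torsionCongr (quotProdEquiv _ _)).trans ?_
  refine torsionProdOfTrivial (aux_calA_torsionfree muC ?_)
  have heq : (fun b : B => muC (Sum.inr b)) = fun b : B => mu (Sum.inr b) := funext hcr'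
  rw [heq]
  exact hB

end Step

/-- The torsion subgroup of N(A,B) = M(A,B)/(𝒜 + ℬ) depends, up to isomorphism, only on
the finite abelian group G, and not on the choice of the finite sets A, B and the map
μ : A ∪ B → G (with μ(A) and μ(B) generating G). -/
theorem statement3
    (G : Type) [CommGroup G] [Fintype G]
    (A B C D : Type) [Fintype A] [Fintype B] [Fintype C] [Fintype D]
    (μ : A ⊕ B → G) (ν : C ⊕ D → G)
    (hA : Subgroup.closure (Set.range fun a : A => μ (Sum.inl a)) = ⊤)
    (hB : Subgroup.closure (Set.range fun b : B => μ (Sum.inr b)) = ⊤)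
    (hC : Subgroup.closure (Set.range fun c : C => ν (Sum.inl c)) = ⊤)
    (hD : Subgroup.closure (Set.range fun d : D => ν (Sum.inr d)) = ⊤) :
    Nonempty
      ((AddCommGroup.torsion ((A → B → ZG G) ⧸ (calA G A B μ ⊔ calB G A B μ))) ≃+
       (AddCommGroup.torsion ((C → D → ZG G) ⧸ (calA G C D ν ⊔ calB G C D ν)))) := by
  classical
  let mu1 : (A ⊕ C) ⊕ B → G :=
    Sum.elim (Sum.elim (fun a => μ (Sum.inl a)) (fun c => ν (Sum.inl c))) (fun b => μ (Sum.inr b))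
  let mu2 : (C ⊕ A) ⊕ B → G :=
    Sum.elim (Sum.elim (fun c => ν (Sum.inl c)) (fun a => μ (Sum.inl a))) (fun b => μ (Sum.inr b))
  let muCB : C ⊕ B → G := Sum.elim (fun c => ν (Sum.inl c)) (fun b => μ (Sum.inr b))
  let muAB2 : A ⊕ B → G := Sum.elim (fun a => μ (Sum.inl a)) (fun b => μ (Sum.inr b))
  let muBC : B ⊕ C → G := Sum.elim (fun b => μ (Sum.inr b)) (fun c => ν (Sum.inl c))
  let lam3 : (B ⊕ D) ⊕ C → G :=
    Sum.elim (Sum.elim (fun b => μ (Sum.inr b)) (fun d => ν (Sum.inr d))) (fun c => ν (Sum.inl c))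
  let lam4 : (D ⊕ B) ⊕ C → G :=
    Sum.elim (Sum.elim (fun d => ν (Sum.inr d)) (fun b => μ (Sum.inr b))) (fun c => ν (Sum.inl c))
  let muDC : D ⊕ C → G := Sum.elim (fun d => ν (Sum.inr d)) (fun c => ν (Sum.inl c))
  have E1 := stepA (G := G) mu1 μ muCB (fun a => rfl) (fun c => rfl) (fun b => rfl) (fun b => rfl)
    (fun c => aux_span (fun a : A => μ (Sum.inl a)) hA (muCB (Sum.inl c))) hB
  have E2 := torsionCongr (relabelQuotEquiv (G := G) (Equiv.sumComm A C) mu1 mu2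
    (fun x => by cases x <;> rfl) (fun b => rfl))
  have E3 := stepA (G := G) mu2 muCB muAB2 (fun c => rfl) (fun a => rfl) (fun b => rfl)
    (fun b => rfl)
    (fun a => aux_span (fun c : C => ν (Sum.inl c)) hC (muAB2 (Sum.inl a))) hB
  have E4 := torsionCongr (transpQuotEquiv (G := G) muCB muBC (fun b => rfl) (fun c => rfl))
  have E5 := stepA (G := G) lam3 muBC muDC (fun b => rfl) (fun d => rfl) (fun c => rfl)
    (fun c => rfl)
    (fun d => aux_span (fun b : B => μ (Sum.inr b)) hB (muDC (Sum.inl d))) hC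
  have E6 := torsionCongr (relabelQuotEquiv (G := G) (Equiv.sumComm B D) lam3 lam4
    (fun x => by cases x <;> rfl) (fun c => rfl))
  have E7 := stepA (G := G) lam4 muDC muBC (fun d => rfl) (fun b => rfl) (fun c => rfl)
    (fun c => rfl)
    (fun b => aux_span (fun d : D => ν (Sum.inr d)) hD (muBC (Sum.inl b))) hC
  have E8 := torsionCongr (transpQuotEquiv (G := G) muDC ν (fun c => rfl) (fun d => rfl))
  exact ⟨E1.symm.trans (E2.trans (E3.trans (E4.trans (E5.symm.trans
    (E6.trans (E7.trans E8))))))⟩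
end

section
/- If the finite abelian group G is cyclic, then N(A,B) is torsion free, i.e. the torsion subgroup T(N(A,B)) is trivial. -/
open MonoidAlgebra

variable (G : Type) [CommGroup G] (A B : Type)

section Aux

variable {G : Type} [CommGroup G] [Fintype G]

/-- The norm element N = Σ_{h ∈ G} h of ℤ[G]. -/
noncomputable def NN (G : Type) [CommGroup G] [Fintype G] : ZG G :=
  ∑ h : G, MonoidAlgebra.of ℤ G h

lemma NN_apply (h : G) : (NN G).coeff h = 1 := by
  classical
  rw [NN, MonoidAlgebra.coeff_sum, Finset.sum_apply']
  simp [MonoidAlgebra.of_apply, MonoidAlgebra.coeff_single, Finsupp.single_apply]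

lemma NN_mul_of (h : G) : NN G * MonoidAlgebra.of ℤ G h = NN G := by
  rw [NN, Finset.sum_mul]
  exact Fintype.sum_equiv (Equiv.mulRight h) _ _ (fun x => by rw [← map_mul]; rfl)

lemma NN_mul_sub (h : G) : NN G * (1 - MonoidAlgebra.of ℤ G h) = 0 := by
  rw [mul_sub, mul_one, NN_mul_of, sub_self]

/-- The augmentation map ℤ[G] → ℤ. -/
noncomputable def aug (G : Type) [CommGroup G] : ZG G →ₐ[ℤ] ℤ :=
  MonoidAlgebra.lift ℤ ℤ G 1

lemma aug_of (h : G) : aug G (MonoidAlgebra.of ℤ G h) = 1 := by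
  rw [aug, MonoidAlgebra.lift_of]; rfl

lemma aug_apply (Y : ZG G) : aug G Y = ∑ h : G, Y.coeff h := by
  rw [aug, MonoidAlgebra.lift_apply, Finsupp.sum_fintype]
  · simp
  · intro i; simp

lemma aug_NN : aug G (NN G) = (Fintype.card G : ℤ) := by
  rw [NN, map_sum]
  rw [Finset.sum_congr rfl (fun x _ => aug_of x)]
  simp [Finset.card_univ]

/-- From generation of G, 1 - g₀ is an ℤ[G]-combination of the 1 - v b. -/
lemma exists_comb {B : Type} [Fintype B] (v : B → G)
    (hv : Subgroup.closure (Set.range v) = ⊤) (g0 : G) :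
    ∃ δ : B → ZG G, ∑ b : B, δ b * (1 - MonoidAlgebra.of ℤ G (v b))
      = 1 - MonoidAlgebra.of ℤ G g0 := by
  set S : Submodule (ZG G) (ZG G) :=
    Submodule.span (ZG G) (Set.range fun b => 1 - MonoidAlgebra.of ℤ G (v b)) with hS
  have hmem : 1 - MonoidAlgebra.of ℤ G g0 ∈ S := by
    let H : Subgroup G :=
      { carrier := {h : G | (1 : ZG G) - MonoidAlgebra.of ℤ G h ∈ S}
        one_mem' := by
          show (1 : ZG G) - MonoidAlgebra.of ℤ G (1 : G) ∈ S
          simp only [map_one, sub_self]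
          exact S.zero_mem
        mul_mem' := by
          intro a b ha hb
          simp only [Set.mem_setOf_eq] at *
          have key : (1 : ZG G) - MonoidAlgebra.of ℤ G (a * b)
              = ((1 : ZG G) - MonoidAlgebra.of ℤ G a)
                + MonoidAlgebra.of ℤ G a * ((1 : ZG G) - MonoidAlgebra.of ℤ G b) := by
            rw [map_mul]; ring
          rw [key]
          have hm := S.smul_mem (MonoidAlgebra.of ℤ G a) hb
          rw [smul_eq_mul] at hm
          exact S.add_mem ha hm
        inv_mem' := by
          intro a ha
          simp only [Set.mem_setOf_eq] at *
          have h2 : MonoidAlgebra.of ℤ G a⁻¹ * MonoidAlgebra.of ℤ G a = 1 := by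
            rw [← map_mul, inv_mul_cancel, map_one]
          have key : (1 : ZG G) - MonoidAlgebra.of ℤ G a⁻¹
              = (- MonoidAlgebra.of ℤ G a⁻¹) * ((1 : ZG G) - MonoidAlgebra.of ℤ G a) := by
            linear_combination -h2
          rw [key]
          have hm := S.smul_mem (- MonoidAlgebra.of ℤ G a⁻¹) ha
          rw [smul_eq_mul] at hm
          exact hm }
    have hle : Subgroup.closure (Set.range v) ≤ H := by
      rw [Subgroup.closure_le]
      rintro _ ⟨b, rfl⟩
      exact Submodule.subset_span ⟨b, rfl⟩
    rw [hv] at hle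
    exact hle (Subgroup.mem_top g0)
  rw [hS, Submodule.mem_span_range_iff_exists_fun] at hmem
  obtain ⟨δ, hδ⟩ := hmem
  exact ⟨δ, by simpa [smul_eq_mul] using hδ⟩

lemma exists_geom {g : G} (hg : ∀ x : G, x ∈ Submonoid.powers g) (h : G) :
    ∃ u : ZG G, 1 - MonoidAlgebra.of ℤ G h = u * (1 - MonoidAlgebra.of ℤ G g) := by
  obtain ⟨k, (hk : g ^ k = h)⟩ := hg h
  induction k generalizing h with
  | zero => exact ⟨0, by rw [← hk, pow_zero, map_one]; ring⟩
  | succ k ih =>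
      obtain ⟨u, hu⟩ := ih (g ^ k) rfl
      refine ⟨u + MonoidAlgebra.of ℤ G (g ^ k), ?_⟩
      rw [← hk, pow_succ, map_mul]
      linear_combination hu

/-- Any element of augmentation zero is divisible by 1 - g, for g a generator. -/
lemma exists_div_sigma {g : G} (hg : ∀ x : G, x ∈ Submonoid.powers g)
    (Y : ZG G) (hY : aug G Y = 0) :
    ∃ c : ZG G, Y = c * (1 - MonoidAlgebra.of ℤ G g) := by
  choose u hu using exists_geom (G := G) hg
  refine ⟨-∑ h : G, (Y.coeff h) • u h, ?_⟩
  have hrep : ∑ h : G, (Y.coeff h) • MonoidAlgebra.of ℤ G h = Y := by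
    conv_rhs => rw [← MonoidAlgebra.sum_coeff_single Y,
      Finsupp.sum_fintype _ _ (fun i => MonoidAlgebra.single_zero i)]
    refine Finset.sum_congr rfl fun h _ => ?_
    rw [MonoidAlgebra.of_apply, MonoidAlgebra.smul_single', mul_one]
  have key : (∑ h : G, (Y.coeff h) • u h) * (1 - MonoidAlgebra.of ℤ G g)
      = (aug G Y) • (1 : ZG G) - Y := by
    rw [Finset.sum_mul]
    calc ∑ h : G, (Y.coeff h) • u h * (1 - MonoidAlgebra.of ℤ G g)
        = ∑ h : G, (Y.coeff h) • ((1 : ZG G) - MonoidAlgebra.of ℤ G h) := by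
          refine Finset.sum_congr rfl fun h _ => ?_
          rw [smul_mul_assoc, ← hu h]
      _ = (∑ h : G, Y.coeff h) • (1 : ZG G) - ∑ h : G, (Y.coeff h) • MonoidAlgebra.of ℤ G h := by
          simp only [smul_sub]
          rw [Finset.sum_sub_distrib, ← Finset.sum_smul]
      _ = (aug G Y) • (1 : ZG G) - Y := by rw [hrep, aug_apply]
  rw [hY, zero_smul, zero_sub] at key
  linear_combination key

/-- If r·(1-g) is divisible by M, then r = M·c + t·N  (cyclic case: Ann(1-g) = ℤN). -/
lemma exists_of_mul_sigma {g : G} (hg : ∀ x : G, x ∈ Submonoid.powers g)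
    (M : ℤ) (r s : ZG G)
    (h : r * (1 - MonoidAlgebra.of ℤ G g) = (M : ZG G) * s) :
    ∃ c : ZG G, ∃ t : ℤ, r = (M : ZG G) * c + ((t : ℤ) : ZG G) * NN G := by
  have hdvd1 : ∀ h' : G, M ∣ r.coeff h' - r.coeff (h' * g⁻¹) := by
    intro h'
    refine ⟨s.coeff h', ?_⟩
    have h1 : (r * (1 - MonoidAlgebra.of ℤ G g)).coeff h' = r.coeff h' - r.coeff (h' * g⁻¹) := by
      rw [mul_sub, mul_one, MonoidAlgebra.coeff_sub, Finsupp.sub_apply, MonoidAlgebra.of_apply,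
        MonoidAlgebra.coeff_mul_single_apply, mul_one]
    have h2 : ((M : ZG G) * s).coeff h' = M * s.coeff h' := by
      rw [← zsmul_eq_mul, MonoidAlgebra.coeff_smul_apply, smul_eq_mul]
    rw [← h1, h, h2]
  have hdvd2 : ∀ k : ℕ, M ∣ r.coeff (g ^ k) - r.coeff 1 := by
    intro k
    induction k with
    | zero => simp
    | succ k ih =>
        have h3 : g ^ (k + 1) * g⁻¹ = g ^ k := by
          rw [pow_succ, mul_inv_cancel_right]
        have h5 := hdvd1 (g ^ (k + 1))
        rw [h3] at h5
        have h4 : r.coeff (g ^ (k+1)) - r.coeff 1 = (r.coeff (g ^ (k+1)) - r.coeff (g ^ k)) + (r.coeff (g ^ k) - r.coeff 1) := by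
          ring
        rw [h4]; exact dvd_add h5 ih
  have hdvd : ∀ h' : G, M ∣ r.coeff h' - r.coeff 1 := by
    intro h'
    obtain ⟨k, hk⟩ := hg h'
    rw [← hk]; exact hdvd2 k
  refine ⟨MonoidAlgebra.ofCoeff (Finsupp.mapRange (fun z => z / M) (by simp) (r - (r.coeff 1) • NN G).coeff), r.coeff 1, ?_⟩
  rw [← zsmul_eq_mul, ← zsmul_eq_mul]
  refine MonoidAlgebra.ext (Finsupp.ext fun h' => ?_)
  rw [MonoidAlgebra.coeff_add, Finsupp.add_apply, MonoidAlgebra.coeff_smul_apply, MonoidAlgebra.coeff_smul_apply,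
    MonoidAlgebra.coeff_ofCoeff, Finsupp.mapRange_apply, MonoidAlgebra.coeff_sub, Finsupp.sub_apply,
    MonoidAlgebra.coeff_smul_apply, NN_apply]
  simp only [smul_eq_mul, mul_one]
  rw [Int.mul_ediv_cancel' (hdvd h')]
  ring

end Aux

/-- If G is cyclic, then N(A,B) = M(A,B)/(𝒜 + ℬ) is torsion free. -/
theorem statement4
    (G : Type) [CommGroup G] [Fintype G] [IsCyclic G]
    (A B : Type) [Fintype A] [Fintype B]
    (μ : A ⊕ B → G)
    (hA : Subgroup.closure (Set.range fun a : A => μ (Sum.inl a)) = ⊤)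
    (hB : Subgroup.closure (Set.range fun b : B => μ (Sum.inr b)) = ⊤) :
    AddCommGroup.torsion ((A → B → ZG G) ⧸ (calA G A B μ ⊔ calB G A B μ)) = ⊥ := by
  classical
  obtain ⟨g, hg⟩ := IsCyclic.exists_monoid_generator (α := G)
  rw [AddSubgroup.eq_bot_iff_forall]
  intro x hx
  obtain ⟨w, rfl⟩ := QuotientAddGroup.mk_surjective x
  have hx' : IsOfFinAddOrder
      ((w : (A → B → ZG G) ⧸ (calA G A B μ ⊔ calB G A B μ))) := hx
  rw [isOfFinAddOrder_iff_nsmul_eq_zero] at hx'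
  obtain ⟨m, hm, hmw⟩ := hx'
  have hmem : (m • w) ∈ calA G A B μ ⊔ calB G A B μ := by
    rw [← QuotientAddGroup.eq_zero_iff]
    exact hmw
  rw [AddSubgroup.mem_sup] at hmem
  obtain ⟨p, ⟨α, hp⟩, q, ⟨β, hq⟩, hpq⟩ := hmem
  -- notations (written out fully)
  have hrel : ∀ a b, α a * (1 - MonoidAlgebra.of ℤ G (μ (Sum.inr b)))
      + β b * (1 - MonoidAlgebra.of ℤ G (μ (Sum.inl a)))
      = ((m : ℕ) : ZG G) * w a b := by
    intro a b
    have h1 := congrFun (congrFun hpq a) b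
    simp only [Pi.add_apply, Pi.smul_apply] at h1
    rw [hp a b, hq a b] at h1
    rw [h1, nsmul_eq_mul]
  obtain ⟨δ, hδ⟩ := exists_comb (G := G) (fun b => μ (Sum.inr b)) hB g
  obtain ⟨γ, hγ⟩ := exists_comb (G := G) (fun a => μ (Sum.inl a)) hA g
  have hY0 : aug G ((((Fintype.card G : ℕ) : ZG G)) * (∑ b : B, δ b * β b)
      - (((∑ b : B, aug G (δ b) * aug G (β b)) : ℤ) : ZG G) * NN G) = 0 := by
    rw [map_sub, map_mul, map_mul, map_natCast, map_intCast, aug_NN, map_sum]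
    simp only [map_mul, Int.cast_id]
    ring
  obtain ⟨c, hc⟩ := exists_div_sigma hg _ hY0
  -- hc : nC * D - S0 * NN = c * σ
  have hNx : ∀ a : A, NN G * (1 - MonoidAlgebra.of ℤ G (μ (Sum.inl a))) = 0 :=
    fun a => NN_mul_sub _
  have hNy : ∀ b : B, NN G * (1 - MonoidAlgebra.of ℤ G (μ (Sum.inr b))) = 0 :=
    fun b => NN_mul_sub _
  have hNσ : NN G * (1 - MonoidAlgebra.of ℤ G g) = 0 := NN_mul_sub _
  -- H1 : α a * σ + D * x a = m * P a
  have H1 : ∀ a : A, α a * (1 - MonoidAlgebra.of ℤ G g)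
      + (∑ b : B, δ b * β b) * (1 - MonoidAlgebra.of ℤ G (μ (Sum.inl a)))
      = ((m : ℕ) : ZG G) * (∑ b : B, δ b * w a b) := by
    intro a
    rw [← hδ, Finset.mul_sum, Finset.sum_mul, Finset.mul_sum, ← Finset.sum_add_distrib]
    refine Finset.sum_congr rfl fun b _ => ?_
    linear_combination δ b * hrel a b
  -- H2 : β b * σ + E * y b = m * Q b
  have H2 : ∀ b : B, β b * (1 - MonoidAlgebra.of ℤ G g)
      + (∑ a : A, γ a * α a) * (1 - MonoidAlgebra.of ℤ G (μ (Sum.inr b)))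
      = ((m : ℕ) : ZG G) * (∑ a : A, γ a * w a b) := by
    intro b
    rw [← hγ, Finset.mul_sum, Finset.sum_mul, Finset.mul_sum, ← Finset.sum_add_distrib]
    refine Finset.sum_congr rfl fun a _ => ?_
    linear_combination γ a * hrel a b
  -- Hs : E σ + D σ = m * (Σ_a γ_a P_a)
  have Hs : (∑ a : A, γ a * α a) * (1 - MonoidAlgebra.of ℤ G g)
      + (∑ b : B, δ b * β b) * (1 - MonoidAlgebra.of ℤ G g)
      = ((m : ℕ) : ZG G) * (∑ a : A, γ a * (∑ b : B, δ b * w a b)) := by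
    have e3 : ∑ a : A, ((γ a * α a) * (1 - MonoidAlgebra.of ℤ G g)
        + (∑ b : B, δ b * β b) * (γ a * (1 - MonoidAlgebra.of ℤ G (μ (Sum.inl a)))))
        = (∑ a : A, γ a * α a) * (1 - MonoidAlgebra.of ℤ G g)
          + (∑ b : B, δ b * β b) * (1 - MonoidAlgebra.of ℤ G g) := by
      rw [Finset.sum_add_distrib, ← Finset.sum_mul, ← Finset.mul_sum, hγ]
    have e4 : ∑ a : A, γ a * (((m : ℕ) : ZG G) * (∑ b : B, δ b * w a b))
        = ((m : ℕ) : ZG G) * (∑ a : A, γ a * (∑ b : B, δ b * w a b)) := by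
      rw [Finset.mul_sum]
      exact Finset.sum_congr rfl fun a _ => by ring
    rw [← e3, ← e4]
    refine Finset.sum_congr rfl fun a _ => ?_
    linear_combination γ a * H1 a
  -- the key divisibility modulus
  set Mi : ℤ := ((Fintype.card G * m : ℕ) : ℤ) with hMidef
  have hMC : (Mi : ZG G) = ((Fintype.card G : ℕ) : ZG G) * ((m : ℕ) : ZG G) := by
    rw [hMidef]; push_cast; ring
  -- (nC E + c σ) σ = Mi * s₂
  have hA0 : ((((Fintype.card G : ℕ) : ZG G)) * (∑ a : A, γ a * α a)
      + c * (1 - MonoidAlgebra.of ℤ G g)) * (1 - MonoidAlgebra.of ℤ G g)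
      = (Mi : ZG G) * (∑ a : A, γ a * (∑ b : B, δ b * w a b)) := by
    rw [hMC]
    linear_combination (((Fintype.card G : ℕ) : ZG G)) * Hs
      - (1 - MonoidAlgebra.of ℤ G g) * hc
      - (((∑ b : B, aug G (δ b) * aug G (β b)) : ℤ) : ZG G) * hNσ
  obtain ⟨e, f, hef⟩ := exists_of_mul_sigma hg Mi _ _ hA0
  rw [hMC] at hef
  -- I : (nC α a + c x a) σ = Mi * P a
  have I : ∀ a : A, ((((Fintype.card G : ℕ) : ZG G)) * α a
      + c * (1 - MonoidAlgebra.of ℤ G (μ (Sum.inl a)))) * (1 - MonoidAlgebra.of ℤ G g)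
      = (Mi : ZG G) * (∑ b : B, δ b * w a b) := by
    intro a
    rw [hMC]
    linear_combination (((Fintype.card G : ℕ) : ZG G)) * H1 a
      - (1 - MonoidAlgebra.of ℤ G (μ (Sum.inl a))) * hc
      - (((∑ b : B, aug G (δ b) * aug G (β b)) : ℤ) : ZG G) * hNx a
  -- II : (nC β b - c y b) σ = Mi * (Q b - e y b)
  have II : ∀ b : B, ((((Fintype.card G : ℕ) : ZG G)) * β b
      - c * (1 - MonoidAlgebra.of ℤ G (μ (Sum.inr b)))) * (1 - MonoidAlgebra.of ℤ G g)
      = (Mi : ZG G) * ((∑ a : A, γ a * w a b)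
        - e * (1 - MonoidAlgebra.of ℤ G (μ (Sum.inr b)))) := by
    intro b
    rw [hMC]
    linear_combination (((Fintype.card G : ℕ) : ZG G)) * H2 b
      - (1 - MonoidAlgebra.of ℤ G (μ (Sum.inr b))) * hef
      - ((f : ℤ) : ZG G) * hNy b
  have Ichoice : ∀ a : A, ∃ c2 : ZG G, ∃ t2 : ℤ,
      (((Fintype.card G : ℕ) : ZG G)) * α a
        + c * (1 - MonoidAlgebra.of ℤ G (μ (Sum.inl a)))
      = (Mi : ZG G) * c2 + ((t2 : ℤ) : ZG G) * NN G :=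
    fun a => exists_of_mul_sigma hg Mi _ _ (I a)
  choose α₂ s hα₂ using Ichoice
  have IIchoice : ∀ b : B, ∃ c2 : ZG G, ∃ t2 : ℤ,
      (((Fintype.card G : ℕ) : ZG G)) * β b
        - c * (1 - MonoidAlgebra.of ℤ G (μ (Sum.inr b)))
      = (Mi : ZG G) * c2 + ((t2 : ℤ) : ZG G) * NN G :=
    fun b => exists_of_mul_sigma hg Mi _ _ (II b)
  choose β₂ t hβ₂ using IIchoice
  have final : ∀ a b, (Mi : ZG G) * (α₂ a * (1 - MonoidAlgebra.of ℤ G (μ (Sum.inr b)))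
      + β₂ b * (1 - MonoidAlgebra.of ℤ G (μ (Sum.inl a))))
      = (Mi : ZG G) * w a b := by
    intro a b
    have h1 := hα₂ a
    have h2 := hβ₂ b
    rw [hMC] at h1 h2 ⊢
    linear_combination - (1 - MonoidAlgebra.of ℤ G (μ (Sum.inr b))) * h1
      - (1 - MonoidAlgebra.of ℤ G (μ (Sum.inl a))) * h2
      + (((Fintype.card G : ℕ) : ZG G)) * hrel a b
      - ((s a : ℤ) : ZG G) * hNy b - ((t b : ℤ) : ZG G) * hNx a
  have cancel : ∀ a b, α₂ a * (1 - MonoidAlgebra.of ℤ G (μ (Sum.inr b)))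
      + β₂ b * (1 - MonoidAlgebra.of ℤ G (μ (Sum.inl a))) = w a b := by
    intro a b
    have h0 : Mi ≠ 0 := by
      rw [hMidef]
      have : 0 < Fintype.card G * m := Nat.mul_pos Fintype.card_pos hm
      exact_mod_cast this.ne'
    have hcoef := final a b
    refine MonoidAlgebra.ext (Finsupp.ext fun h' => ?_)
    have hcc := congrArg (fun z : ZG G => z.coeff h') hcoef
    rw [← zsmul_eq_mul, ← zsmul_eq_mul, MonoidAlgebra.coeff_smul_apply, MonoidAlgebra.coeff_smul_apply,
      smul_eq_mul, smul_eq_mul] at hcc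
    exact mul_left_cancel₀ h0 hcc
  rw [QuotientAddGroup.eq_zero_iff]
  refine AddSubgroup.mem_sup.2
    ⟨(fun a b => α₂ a * (1 - MonoidAlgebra.of ℤ G (μ (Sum.inr b)))), ⟨α₂, fun a b => rfl⟩,
     (fun a b => β₂ b * (1 - MonoidAlgebra.of ℤ G (μ (Sum.inl a)))), ⟨β₂, fun a b => rfl⟩,
     funext fun a => funext fun b => ?_⟩
  exact cancel a b
end

section
/- Suppose α, β, α′, β′ : {p_1, …, p_n} → ℚ[G] satisfy α(p_i)(e − p_j) + β(p_j)(e − p_i) = α′(p_i)(e − p_j) + β′(p_j)(e − p_i) for all i, j = 1, 2, …, n. Then (α(p_i) + β(p_i))(e − p_j) = (α′(p_i) + β′(p_i))(e − p_j) for all i, j = 1, 2, …, n. In other words, for an element r of 𝒜_ℚ + ℬ_ℚ, the quantity κ_{i,j}(r) = (α(p_i) + β(p_i))(e − p_j) does not depend on the choice of the representation r(a,b) = α(a)(e − b) + β(b)(e − a). -/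
open MonoidAlgebra Finset

/-- "x ∈ ℤ[G]" for an element x of ℚ[G]. -/
def MemZG (G : Type) [CommGroup G] (x : QG G) : Prop := ∃ z : ZG G, toQ G z = x

/-- G = ℤ_{m₁} × ℤ_{m₂} × ⋯ × ℤ_{mₙ}, written multiplicatively. -/
abbrev Gr {n : ℕ} (m : Fin n → ℕ) : Type := (i : Fin n) → Multiplicative (ZMod (m i))

/-- pᵢ, the generator of the i-th factor of G. -/
def pgen {n : ℕ} (m : Fin n → ℕ) (i : Fin n) : Gr m :=
  Pi.mulSingle i (Multiplicative.ofAdd 1)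

/-- Pᵢ = e + pᵢ + pᵢ² + ⋯ + pᵢ^{mᵢ−1} ∈ ℤ[G]. -/
noncomputable def Pel {n : ℕ} (m : Fin n → ℕ) (i : Fin n) : ZG (Gr m) :=
  ∑ k ∈ Finset.range (m i), (MonoidAlgebra.of ℤ (Gr m) (pgen m i)) ^ k

/-- Qᵢ = ∏_{j ≠ i} Pⱼ ∈ ℤ[G]. -/
noncomputable def Qel {n : ℕ} (m : Fin n → ℕ) (i : Fin n) : ZG (Gr m) :=
  ∏ j ∈ Finset.univ.erase i, Pel m j

/-- N = Σ_{g ∈ G} g ∈ ℤ[G]. -/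
noncomputable def Nel {n : ℕ} (m : Fin n → ℕ) [∀ i, NeZero (m i)] : ZG (Gr m) :=
  ∑ g : Gr m, MonoidAlgebra.of ℤ (Gr m) g

/-- pᵢ has order dividing mᵢ. -/
lemma pgen_pow_card {n : ℕ} (m : Fin n → ℕ) (i : Fin n) :
    pgen m i ^ (m i) = 1 := by
  unfold pgen
  rw [← Pi.mulSingle_pow]
  convert Pi.mulSingle_one i
  rw [← ofAdd_nsmul]
  simp [ZMod.natCast_self]

/-- Well-definedness of κ_{i,j}. -/
theorem statement8
    (n : ℕ) (hn : 1 ≤ n) (m : Fin n → ℕ) [∀ i, NeZero (m i)]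
    (α β α' β' : Fin n → QG (Gr m))
    (h : ∀ i j,
      α i * (1 - MonoidAlgebra.of ℚ (Gr m) (pgen m j))
          + β j * (1 - MonoidAlgebra.of ℚ (Gr m) (pgen m i))
        = α' i * (1 - MonoidAlgebra.of ℚ (Gr m) (pgen m j))
          + β' j * (1 - MonoidAlgebra.of ℚ (Gr m) (pgen m i))) :
    ∀ i j,
      (α i + β i) * (1 - MonoidAlgebra.of ℚ (Gr m) (pgen m j))
        = (α' i + β' i) * (1 - MonoidAlgebra.of ℚ (Gr m) (pgen m j)) := by
  intro i j
  set p : Fin n → QG (Gr m) := fun i => MonoidAlgebra.of ℚ (Gr m) (pgen m i) with hp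
  set c : Fin n → QG (Gr m) := fun i => (α i + β i) - (α' i + β' i) with hc
  -- key relations
  have hii : ∀ i, c i * (1 - p i) = 0 := fun i => by
    have := h i i; simp only [hc, hp]; linear_combination this
  have hij : c i * (1 - p j) = - (c j * (1 - p i)) := by
    have h1 := h i j; have h2 := h j i
    simp only [hc, hp]; linear_combination h1 + h2
  -- the norm element P_i
  set P : QG (Gr m) := ∑ k ∈ Finset.range (m i), p i ^ k with hP
  have hpow : p i ^ (m i) = 1 := by
    rw [hp]; rw [← map_pow, pgen_pow_card]; exact map_one _
  have hPkill : P * (1 - p i) = 0 := by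
    have := geom_sum_mul (p i) (m i)
    rw [hpow] at this
    rw [hP]; linear_combination -this
  -- c i * p i = c i
  have hfix : c i * p i = c i := by
    have := hii i; linear_combination -this
  have hfixk : ∀ k, c i * p i ^ k = c i := by
    intro k; induction k with
    | zero => simp
    | succ k ih => rw [pow_succ, ← mul_assoc, ih, hfix]
  -- P * c i = m i • c i
  have hPc : P * c i = (m i : ℚ) • c i := by
    rw [hP, Finset.sum_mul]
    have : ∀ k ∈ Finset.range (m i), p i ^ k * c i = c i := by
      intro k _; rw [mul_comm]; exact hfixk k
    rw [Finset.sum_congr rfl this, Finset.sum_const, Finset.card_range,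
      ← Nat.cast_smul_eq_nsmul ℚ]
  -- conclude
  have key : (m i : ℚ) • (c i * (1 - p j)) = 0 := by
    calc (m i : ℚ) • (c i * (1 - p j)) = (P * c i) * (1 - p j) := by
          rw [hPc, smul_mul_assoc]
      _ = P * (c i * (1 - p j)) := by ring
      _ = P * (-(c j * (1 - p i))) := by rw [hij]
      _ = -(c j * (P * (1 - p i))) := by ring
      _ = 0 := by rw [hPkill]; ring
  have hm : (m i : ℚ) ≠ 0 := Nat.cast_ne_zero.mpr (NeZero.ne (m i))
  have hz : c i * (1 - p j) = 0 := by
    rcases smul_eq_zero.mp key with h' | h'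
    · exact absurd h' hm
    · exact h'
  simp only [hc, hp] at hz ⊢
  linear_combination hz
end
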